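/- arXiv:1907.12694 — 4 statements merged into one kernel-verified Lean document; each statement's English description precedes it below -/
import Mathlib

section
/- Let X be the simple symmetric random walk conditioned to stay positive (the h-transform with h(x)=x), started at 0, and let Z_n = max{X_1,...,X_n}. Then for every k ≥ 1, P(X_n ≥ k) ≥ (1/2) P(Z_n ≥ 2k). -/
open MeasureTheory ProbabilityTheory Finset

/-- The simple symmetric random walk conditioned to stay positive (Doob h-transform
with `h(x) = x`), started at `a`: transition probabilities `P(x, x±1) = (x±1)/(2x)` for
`x ≥ 1`, and a sure step from `0` to `1`. -/
structure IsHProcess {Ω : Type*} [MeasurableSpace Ω] (P : Measure Ω)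
    (X : ℕ → Ω → ℤ) (a : ℤ) : Prop where
  meas : ∀ n, Measurable (X n)
  start : ∀ᵐ ω ∂P, X 0 ω = a
  step_up : ∀ (n : ℕ) (s : ℕ → ℤ), 1 ≤ s n →
    P {ω | X (n+1) ω = s n + 1 ∧ ∀ i, i ≤ n → X i ω = s i}
      = ENNReal.ofReal (((s n : ℝ) + 1) / (2 * (s n : ℝ)))
          * P {ω | ∀ i, i ≤ n → X i ω = s i}
  step_down : ∀ (n : ℕ) (s : ℕ → ℤ), 1 ≤ s n →
    P {ω | X (n+1) ω = s n - 1 ∧ ∀ i, i ≤ n → X i ω = s i}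
      = ENNReal.ofReal (((s n : ℝ) - 1) / (2 * (s n : ℝ)))
          * P {ω | ∀ i, i ≤ n → X i ω = s i}
  step_zero : ∀ (n : ℕ) (s : ℕ → ℤ), s n = 0 →
    P {ω | X (n+1) ω = 1 ∧ ∀ i, i ≤ n → X i ω = s i}
      = P {ω | ∀ i, i ≤ n → X i ω = s i}

namespace HPaux

/-- next position -/
def upd (x : ℤ) (b : Bool) : ℤ := if x = 0 then 1 else if b then x + 1 else x - 1

/-- step weight -/
noncomputable def wt (x : ℤ) (b : Bool) : ℝ :=
  if x = 0 then (if b then 1 else 0)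
  else (if b then ((x : ℝ) + 1) / (2 * (x : ℝ)) else ((x : ℝ) - 1) / (2 * (x : ℝ)))

/-- position after i steps driven by bits d, started at x -/
def pos : ℤ → (ℕ → Bool) → ℕ → ℤ
  | x, _, 0 => x
  | x, d, m+1 => pos (upd x (d 0)) (fun i => d (i+1)) m

/-- weight of the length-m path -/
noncomputable def W : ℤ → (ℕ → Bool) → ℕ → ℝ
  | _, _, 0 => 1
  | x, d, m+1 => wt x (d 0) * W (upd x (d 0)) (fun i => d (i+1)) m

/-- whether level K is reached by time m -/
def reach (K : ℤ) : ℤ → (ℕ → Bool) → ℕ → Bool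
  | x, _, 0 => decide (K ≤ x)
  | x, d, m+1 => decide (K ≤ x) || reach K (upd x (d 0)) (fun i => d (i+1)) m

/-- probability that position after m steps is ≥ K -/
noncomputable def A (K : ℤ) : ℕ → ℤ → ℝ
  | 0, x => if K ≤ x then 1 else 0
  | m+1, x => wt x true * A K m (upd x true) + wt x false * A K m (upd x false)

/-- probability that level K is reached by time m -/
noncomputable def Bf (K : ℤ) : ℕ → ℤ → ℝ
  | 0, x => if K ≤ x then 1 else 0
  | m+1, x => if K ≤ x then 1 else
      wt x true * Bf K m (upd x true) + wt x false * Bf K m (upd x false)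

/-- probability of staying ≥ K through time m -/
noncomputable def Cf (K : ℤ) : ℕ → ℤ → ℝ
  | 0, x => if K ≤ x then 1 else 0
  | m+1, x => if K ≤ x then
      wt x true * Cf K m (upd x true) + wt x false * Cf K m (upd x false) else 0

/-- extend a finite bit vector by `true`s -/
def ext (m : ℕ) (c : Fin m → Bool) : ℕ → Bool := fun i => if h : i < m then c ⟨i, h⟩ else true

lemma upd_nonneg {x : ℤ} (hx : 0 ≤ x) (b : Bool) : 0 ≤ upd x b := by
  unfold upd; split
  · norm_num
  · cases b <;> simp <;> omega

lemma wt_nonneg {x : ℤ} (hx : 0 ≤ x) (b : Bool) : 0 ≤ wt x b := by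
  unfold wt; split
  · cases b <;> norm_num
  · rename_i h
    have h1 : (1 : ℤ) ≤ x := by omega
    have h1' : (1 : ℝ) ≤ (x : ℝ) := by exact_mod_cast h1
    cases b <;> simp only [if_true, if_false, Bool.false_eq_true] <;>
      apply div_nonneg <;> linarith

lemma wt_sum {x : ℤ} (hx : 0 ≤ x) : wt x true + wt x false = 1 := by
  unfold wt; split
  · norm_num
  · rename_i h
    have h1 : (1 : ℤ) ≤ x := by omega
    have h1' : (1 : ℝ) ≤ (x : ℝ) := by exact_mod_cast h1
    have h0 : (x : ℝ) ≠ 0 := by linarith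
    simp only [Bool.false_eq_true, ↓reduceIte]
    field_simp
    ring

lemma pos_zero (x : ℤ) (d : ℕ → Bool) : pos x d 0 = x := rfl

lemma pos_nonneg {x : ℤ} (hx : 0 ≤ x) (d : ℕ → Bool) : ∀ i, 0 ≤ pos x d i := by
  intro i
  induction i generalizing x d with
  | zero => exact hx
  | succ i ih => exact ih (upd_nonneg hx _) _

lemma pos_succ (x : ℤ) (d : ℕ → Bool) : ∀ i, pos x d (i+1) = upd (pos x d i) (d i) := by
  intro i
  induction i generalizing x d with
  | zero => rfl
  | succ i ih =>
      show pos (upd x (d 0)) (fun j => d (j+1)) (i+1) = _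
      rw [ih]
      rfl

lemma pos_congr (x : ℤ) (d d' : ℕ → Bool) : ∀ i, (∀ j, j < i → d j = d' j) →
    pos x d i = pos x d' i := by
  intro i
  induction i generalizing x d d' with
  | zero => intro _; rfl
  | succ i ih =>
      intro h
      show pos (upd x (d 0)) (fun j => d (j+1)) i = pos (upd x (d' 0)) (fun j => d' (j+1)) i
      rw [h 0 (by omega)]
      exact ih _ _ _ (fun j hj => h (j+1) (by omega))

lemma W_prod (x : ℤ) (d : ℕ → Bool) : ∀ m, W x d m = ∏ i ∈ range m, wt (pos x d i) (d i) := by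
  intro m
  induction m generalizing x d with
  | zero => rfl
  | succ m ih =>
      show wt x (d 0) * W (upd x (d 0)) (fun i => d (i+1)) m = _
      rw [ih, Finset.prod_range_succ', mul_comm]
      rfl

lemma W_succ (x : ℤ) (d : ℕ → Bool) (m : ℕ) :
    W x d (m+1) = W x d m * wt (pos x d m) (d m) := by
  rw [W_prod, W_prod, Finset.prod_range_succ]

lemma W_nonneg {x : ℤ} (hx : 0 ≤ x) (d : ℕ → Bool) (m : ℕ) : 0 ≤ W x d m := by
  rw [W_prod]
  apply Finset.prod_nonneg
  intro i _
  exact wt_nonneg (pos_nonneg hx d i) _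

lemma reach_iff (K : ℤ) (x : ℤ) (d : ℕ → Bool) : ∀ m,
    reach K x d m = true ↔ ∃ j, j ≤ m ∧ K ≤ pos x d j := by
  intro m
  induction m generalizing x d with
  | zero =>
      simp only [reach, decide_eq_true_eq]
      constructor
      · intro h; exact ⟨0, le_refl _, h⟩
      · rintro ⟨j, hj, h⟩; interval_cases j; exact h
  | succ m ih =>
      simp only [reach, Bool.or_eq_true, decide_eq_true_eq, ih]
      constructor
      · rintro (h | ⟨j, hj, h⟩)
        · exact ⟨0, by omega, h⟩
        · exact ⟨j+1, by omega, h⟩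
      · rintro ⟨j, hj, h⟩
        match j with
        | 0 => exact Or.inl h
        | j+1 => exact Or.inr ⟨j, by omega, h⟩

lemma ext_cons_zero (m : ℕ) (b : Bool) (c : Fin m → Bool) : ext (m+1) (Fin.cons b c) 0 = b := by
  simp [ext]

lemma ext_cons_tail (m : ℕ) (b : Bool) (c : Fin m → Bool) :
    (fun i => ext (m+1) (Fin.cons b c) (i+1)) = ext m c := by
  funext i
  simp only [ext]
  by_cases h : i < m
  · rw [dif_pos (by omega : i + 1 < m + 1), dif_pos h]
    rfl
  · rw [dif_neg (by omega : ¬ i + 1 < m + 1), dif_neg h]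

lemma sum_split (m : ℕ) (F : (Fin (m+1) → Bool) → ℝ) :
    ∑ c : Fin (m+1) → Bool, F c = ∑ b : Bool, ∑ c : Fin m → Bool, F (Fin.cons b c) := by
  rw [← (Fintype.sum_equiv (Fin.consEquiv fun _ => Bool) (fun p => F (Fin.cons p.1 p.2)) F (fun p => rfl))]
  exact Fintype.sum_prod_type _

lemma sumW {x : ℤ} (hx : 0 ≤ x) : ∀ m, ∑ c : Fin m → Bool, W x (ext m c) m = 1 := by
  intro m
  induction m generalizing x with
  | zero => rw [Fintype.sum_unique]; rfl
  | succ m ih =>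
      rw [sum_split]
      have h : ∀ b (c : Fin m → Bool), W x (ext (m+1) (Fin.cons b c)) (m+1)
          = wt x b * W (upd x b) (ext m c) m := by
        intro b c
        show wt x (ext (m+1) (Fin.cons b c) 0) * _ = _
        rw [ext_cons_zero, ext_cons_tail]
      simp only [h, ← Finset.mul_sum]
      rw [Fintype.sum_bool, ih (upd_nonneg hx true), ih (upd_nonneg hx false)]
      simpa using wt_sum hx

lemma sumA (K : ℤ) {x : ℤ} (hx : 0 ≤ x) : ∀ m,
    ∑ c : Fin m → Bool, (if K ≤ pos x (ext m c) m then W x (ext m c) m else 0) = A K m x := by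
  intro m
  induction m generalizing x with
  | zero => rw [Fintype.sum_unique]; rfl
  | succ m ih =>
      rw [sum_split]
      have h : ∀ b (c : Fin m → Bool),
          (if K ≤ pos x (ext (m+1) (Fin.cons b c)) (m+1) then W x (ext (m+1) (Fin.cons b c)) (m+1) else 0)
          = wt x b * (if K ≤ pos (upd x b) (ext m c) m then W (upd x b) (ext m c) m else 0) := by
        intro b c
        have h1 : pos x (ext (m+1) (Fin.cons b c)) (m+1)
            = pos (upd x b) (ext m c) m := by
          show pos (upd x (ext (m+1) (Fin.cons b c) 0)) (fun i => ext (m+1) (Fin.cons b c) (i+1)) m = _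
          rw [ext_cons_zero, ext_cons_tail]
        have h2 : W x (ext (m+1) (Fin.cons b c)) (m+1)
            = wt x b * W (upd x b) (ext m c) m := by
          show wt x (ext (m+1) (Fin.cons b c) 0) * _ = _
          rw [ext_cons_zero, ext_cons_tail]
        rw [h1, h2, mul_ite, mul_zero]
      simp only [h, ← Finset.mul_sum]
      rw [Fintype.sum_bool, ih (upd_nonneg hx true), ih (upd_nonneg hx false)]
      rfl

lemma sumB (K : ℤ) {x : ℤ} (hx : 0 ≤ x) : ∀ m,
    ∑ c : Fin m → Bool, (if reach K x (ext m c) m then W x (ext m c) m else 0) = Bf K m x := by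
  intro m
  induction m generalizing x with
  | zero =>
      rw [Fintype.sum_unique]
      show (if reach K x _ 0 then _ else _) = _
      simp only [reach, Bf]
      by_cases h : K ≤ x <;> simp [h, W]
  | succ m ih =>
      by_cases hK : K ≤ x
      · have h : ∀ c : Fin (m+1) → Bool, reach K x (ext (m+1) c) (m+1) = true := by
          intro c
          simp [reach, hK]
        simp only [h, if_true]
        show _ = Bf K (m+1) x
        rw [sumW hx (m+1)]
        simp [Bf, hK]
      · rw [sum_split]
        have h : ∀ b (c : Fin m → Bool),
            (if reach K x (ext (m+1) (Fin.cons b c)) (m+1) then W x (ext (m+1) (Fin.cons b c)) (m+1) else 0)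
            = wt x b * (if reach K (upd x b) (ext m c) m then W (upd x b) (ext m c) m else 0) := by
          intro b c
          have h1 : reach K x (ext (m+1) (Fin.cons b c)) (m+1)
              = reach K (upd x b) (ext m c) m := by
            show (decide (K ≤ x) || reach K (upd x (ext (m+1) (Fin.cons b c) 0)) (fun i => ext (m+1) (Fin.cons b c) (i+1)) m) = _
            rw [ext_cons_zero, ext_cons_tail]
            simp [hK]
          have h2 : W x (ext (m+1) (Fin.cons b c)) (m+1)
              = wt x b * W (upd x b) (ext m c) m := by
            show wt x (ext (m+1) (Fin.cons b c) 0) * _ = _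
            rw [ext_cons_zero, ext_cons_tail]
          rw [h1, h2, mul_ite, mul_zero]
        simp only [h, ← Finset.mul_sum]
        rw [Fintype.sum_bool, ih (upd_nonneg hx true), ih (upd_nonneg hx false)]
        show _ = Bf K (m+1) x
        simp [Bf, hK]

lemma A_nonneg (K : ℤ) : ∀ m {x : ℤ}, 0 ≤ x → 0 ≤ A K m x := by
  intro m
  induction m with
  | zero => intro x hx; unfold A; split <;> norm_num
  | succ m ih =>
      intro x hx
      unfold A
      have h1 := ih (upd_nonneg hx true)
      have h2 := ih (upd_nonneg hx false)
      have h3 := wt_nonneg hx true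
      have h4 := wt_nonneg hx false
      positivity

lemma C_nonneg (K : ℤ) : ∀ m {x : ℤ}, 0 ≤ x → 0 ≤ Cf K m x := by
  intro m
  induction m with
  | zero => intro x hx; unfold Cf; split <;> norm_num
  | succ m ih =>
      intro x hx
      unfold Cf
      split
      · have h1 := ih (upd_nonneg hx true)
        have h2 := ih (upd_nonneg hx false)
        have h3 := wt_nonneg hx true
        have h4 := wt_nonneg hx false
        positivity
      · exact le_refl _

lemma C_le_A (K : ℤ) : ∀ m {x : ℤ}, 0 ≤ x → Cf K m x ≤ A K m x := by
  intro m
  induction m with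
  | zero => intro x hx; exact le_refl _
  | succ m ih =>
      intro x hx
      show Cf K (m+1) x ≤ A K (m+1) x
      unfold Cf A
      split
      · have h1 := ih (upd_nonneg hx true)
        have h2 := ih (upd_nonneg hx false)
        have h3 := wt_nonneg hx true
        have h4 := wt_nonneg hx false
        have := mul_le_mul_of_nonneg_left h1 h3
        have := mul_le_mul_of_nonneg_left h2 h4
        linarith
      · have h1 := A_nonneg K m (upd_nonneg hx true)
        have h2 := A_nonneg K m (upd_nonneg hx false)
        have h3 := wt_nonneg hx true
        have h4 := wt_nonneg hx false
        positivity

lemma C_ge (K : ℤ) (hK : 1 ≤ K) : ∀ m {x : ℤ}, K ≤ x →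
    1 - ((K : ℝ) - 1) / (x : ℝ) ≤ Cf K m x := by
  intro m
  induction m with
  | zero =>
      intro x hx
      unfold Cf
      rw [if_pos hx]
      have hx0 : (0:ℝ) < (x:ℝ) := by exact_mod_cast (by omega : (0:ℤ) < x)
      have hKr : (1:ℝ) ≤ (K:ℝ) := by exact_mod_cast hK
      have : 0 ≤ ((K:ℝ) - 1) / (x:ℝ) := div_nonneg (by linarith) (le_of_lt hx0)
      linarith
  | succ m ih =>
      intro x hx
      have hx1 : (1:ℤ) ≤ x := le_trans hK hx
      have hxne : x ≠ 0 := by omega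
      have hx0 : (0:ℝ) < (x:ℝ) := by exact_mod_cast (by omega : (0:ℤ) < x)
      have hKr : (1:ℝ) ≤ (K:ℝ) := by exact_mod_cast hK
      have hxK : (K:ℝ) ≤ (x:ℝ) := by exact_mod_cast hx
      show 1 - ((K : ℝ) - 1) / (x : ℝ) ≤ Cf K (m+1) x
      unfold Cf
      rw [if_pos hx]
      have hwt : wt x true = ((x:ℝ)+1)/(2*(x:ℝ)) ∧ wt x false = ((x:ℝ)-1)/(2*(x:ℝ)) := by
        constructor <;> simp [wt, hxne]
      have hupd : upd x true = x + 1 ∧ upd x false = x - 1 := by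
        constructor <;> simp [upd, hxne]
      rw [hwt.1, hwt.2, hupd.1, hupd.2]
      have hup := ih (x := x + 1) (by omega)
      by_cases hcase : K ≤ x - 1
      · have hdn := ih (x := x - 1) hcase
        have hx1r : (1:ℝ) < (x:ℝ) := by
          have : (1:ℤ) < x := by omega
          exact_mod_cast this
        have e1 : ((x:ℤ)+1:ℤ) = x+1 := rfl
        push_cast
        have hxp : (0:ℝ) < (x:ℝ) + 1 := by linarith
        have hxm : (0:ℝ) < (x:ℝ) - 1 := by linarith
        have b1 : (((x:ℝ)+1)/(2*(x:ℝ))) * (1 - ((K:ℝ)-1)/((x:ℝ)+1))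
            ≤ (((x:ℝ)+1)/(2*(x:ℝ))) * Cf K m (x+1) := by
          apply mul_le_mul_of_nonneg_left _ (by positivity)
          · exact_mod_cast hup
        have b2 : (((x:ℝ)-1)/(2*(x:ℝ))) * (1 - ((K:ℝ)-1)/((x:ℝ)-1))
            ≤ (((x:ℝ)-1)/(2*(x:ℝ))) * Cf K m (x-1) := by
          apply mul_le_mul_of_nonneg_left _ (by positivity)
          · exact_mod_cast hdn
        have key : (((x:ℝ)+1)/(2*(x:ℝ))) * (1 - ((K:ℝ)-1)/((x:ℝ)+1))
            + (((x:ℝ)-1)/(2*(x:ℝ))) * (1 - ((K:ℝ)-1)/((x:ℝ)-1))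
            = 1 - ((K:ℝ)-1)/(x:ℝ) := by
          field_simp
          ring
        linarith
      · -- x = K, drop the down term
        have hxeq : x = K := by omega
        have hdn0 : 0 ≤ Cf K m (x - 1) := C_nonneg K m (by omega)
        have b1 : (((x:ℝ)+1)/(2*(x:ℝ))) * (1 - ((K:ℝ)-1)/((x:ℝ)+1))
            ≤ (((x:ℝ)+1)/(2*(x:ℝ))) * Cf K m (x+1) := by
          apply mul_le_mul_of_nonneg_left _ (by positivity)
          · exact_mod_cast hup
        have b2 : 0 ≤ (((x:ℝ)-1)/(2*(x:ℝ))) * Cf K m (x-1) := by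
          apply mul_nonneg _ hdn0
          apply div_nonneg _ (by positivity)
          linarith
        have key : (((x:ℝ)+1)/(2*(x:ℝ))) * (1 - ((K:ℝ)-1)/((x:ℝ)+1))
            = 1 - ((K:ℝ)-1)/(x:ℝ) := by
          subst hxeq
          have hxp : (0:ℝ) < (x:ℝ) + 1 := by linarith
          field_simp
          ring
        linarith

lemma A_ge_half (k : ℤ) (hk : 1 ≤ k) (m : ℕ) {x : ℤ} (hx : 2*k ≤ x) :
    (1:ℝ)/2 ≤ A k m x := by
  have hkx : k ≤ x := by omega
  have hC := C_ge k hk m hkx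
  have hCA := C_le_A k m (x := x) (by omega)
  have hx0 : (0:ℝ) < (x:ℝ) := by exact_mod_cast (by omega : (0:ℤ) < x)
  have hkr : (1:ℝ) ≤ (k:ℝ) := by exact_mod_cast hk
  have hxr : 2*(k:ℝ) ≤ (x:ℝ) := by exact_mod_cast hx
  have hfrac : ((k:ℝ)-1)/(x:ℝ) ≤ 1/2 := by
    rw [div_le_iff₀ hx0]
    linarith
  linarith

lemma B_le_two_A (k : ℤ) (hk : 1 ≤ k) : ∀ m {x : ℤ}, 0 ≤ x →
    Bf (2*k) m x ≤ 2 * A k m x := by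
  intro m
  induction m with
  | zero =>
      intro x hx
      unfold Bf A
      by_cases h : 2*k ≤ x
      · rw [if_pos h, if_pos (by omega : k ≤ x)]; norm_num
      · rw [if_neg h]
        split <;> norm_num
  | succ m ih =>
      intro x hx
      show Bf (2*k) (m+1) x ≤ 2 * A k (m+1) x
      by_cases h : 2*k ≤ x
      · have h1 := A_ge_half k hk (m+1) h
        have : Bf (2*k) (m+1) x = 1 := by rw [Bf.eq_2, if_pos h]
        rw [this]
        linarith
      · have e : Bf (2*k) (m+1) x
            = wt x true * Bf (2*k) m (upd x true) + wt x false * Bf (2*k) m (upd x false) := by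
          rw [Bf.eq_2, if_neg h]
        rw [e]
        have h1 := ih (upd_nonneg hx true)
        have h2 := ih (upd_nonneg hx false)
        have h3 := wt_nonneg hx true
        have h4 := wt_nonneg hx false
        have b1 := mul_le_mul_of_nonneg_left h1 h3
        have b2 := mul_le_mul_of_nonneg_left h2 h4
        show _ ≤ 2 * (wt x true * A k m (upd x true) + wt x false * A k m (upd x false))
        linarith

section Meas

variable {Ω : Type*} [MeasurableSpace Ω]

/-- cylinder set -/
def cyl (X : ℕ → Ω → ℤ) (s : ℕ → ℤ) (m : ℕ) : Set Ω := {ω | ∀ i, i ≤ m → X i ω = s i}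

lemma cyl_meas {X : ℕ → Ω → ℤ} (hX : ∀ n, Measurable (X n)) (s : ℕ → ℤ) (m : ℕ) :
    MeasurableSet (cyl X s m) := by
  have : cyl X s m = ⋂ (i : ℕ) (_ : i ≤ m), X i ⁻¹' {s i} := by
    ext ω; simp [cyl]
  rw [this]
  exact MeasurableSet.iInter fun i => MeasurableSet.iInter fun _ =>
    (hX i) (measurableSet_singleton _)

/-- canonical bit choice: at position 0, the bit must be `true` -/
def good (d : ℕ → Bool) (m : ℕ) : Prop := ∀ i, i < m → pos 0 d i = 0 → d i = true

lemma cylP (P : Measure Ω) [IsProbabilityMeasure P] {X : ℕ → Ω → ℤ}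
    (hX : IsHProcess P X 0) (d : ℕ → Bool) :
    ∀ m, good d m → P (cyl X (fun i => pos 0 d i) m) = ENNReal.ofReal (W 0 d m) := by
  intro m
  induction m with
  | zero =>
      intro _
      have hae : cyl X (fun i => pos 0 d i) 0 =ᵐ[P] (Set.univ : Set Ω) := by
        rw [Filter.eventuallyEq_univ]
        filter_upwards [hX.start] with ω hω
        intro i hi
        interval_cases i
        simpa [pos_zero] using hω
      rw [measure_congr hae, measure_univ]
      rw [show W 0 d 0 = 1 from rfl, ENNReal.ofReal_one]
  | succ m ih =>
      intro hg
      have hgm : good d m := fun i hi => hg i (by omega)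
      have hIH := ih hgm
      have hsplit : cyl X (fun i => pos 0 d i) (m+1)
          = {ω | X (m+1) ω = pos 0 d (m+1) ∧ ∀ i, i ≤ m → X i ω = pos 0 d i} := by
        ext ω
        constructor
        · intro h
          exact ⟨h (m+1) le_rfl, fun i hi => h i (by omega)⟩
        · rintro ⟨h1, h2⟩ i hi
          rcases Nat.eq_or_lt_of_le hi with rfl | hlt
          · exact h1
          · exact h2 i (by omega)
      have hx0 : (0:ℤ) ≤ pos 0 d m := pos_nonneg le_rfl d m
      have hsucc : pos 0 d (m+1) = upd (pos 0 d m) (d m) := pos_succ 0 d m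
      have hIH' : P {ω | ∀ i, i ≤ m → X i ω = pos 0 d i} = ENNReal.ofReal (W 0 d m) := hIH
      by_cases hzero : pos 0 d m = 0
      · have hdm : d m = true := hg m (by omega) hzero
        have h1 : pos 0 d (m+1) = 1 := by rw [hsucc, hzero]; rfl
        rw [hsplit, h1, hX.step_zero m (fun i => pos 0 d i) hzero, hIH', W_succ]
        rw [show wt (pos 0 d m) (d m) = 1 by simp [wt, hzero, hdm], mul_one]
      · have hx1 : (1:ℤ) ≤ pos 0 d m := by omega
        have hx1r : (1:ℝ) ≤ ((pos 0 d m : ℤ) : ℝ) := by exact_mod_cast hx1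
        cases hdm : d m with
        | true =>
            have h1 : pos 0 d (m+1) = pos 0 d m + 1 := by
              rw [hsucc, hdm]; simp [upd, hzero]
            rw [hsplit, h1, hX.step_up m (fun i => pos 0 d i) hx1, hIH']
            rw [← ENNReal.ofReal_mul (by positivity), W_succ]
            congr 1
            rw [show wt (pos 0 d m) (d m)
              = (((pos 0 d m : ℤ) : ℝ) + 1) / (2 * ((pos 0 d m : ℤ) : ℝ)) by
                simp [wt, hzero, hdm]]
            ring
        | false =>
            have h1 : pos 0 d (m+1) = pos 0 d m - 1 := by
              rw [hsucc, hdm]; simp [upd, hzero]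
            rw [hsplit, h1, hX.step_down m (fun i => pos 0 d i) hx1, hIH']
            rw [← ENNReal.ofReal_mul (div_nonneg (by linarith) (by linarith)), W_succ]
            congr 1
            rw [show wt (pos 0 d m) (d m)
              = (((pos 0 d m : ℤ) : ℝ) - 1) / (2 * ((pos 0 d m : ℤ) : ℝ)) by
                simp [wt, hzero, hdm]]
            ring

lemma W_of_not_good {n : ℕ} (d : ℕ → Bool) (h : ¬ good d n) : W 0 d n = 0 := by
  unfold good at h
  push_neg at h
  obtain ⟨i, hi, h0, hb⟩ := h
  rw [W_prod]
  apply Finset.prod_eq_zero (Finset.mem_range.mpr hi)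
  rw [h0]
  have hf : d i = false := by
    cases hdi : d i
    · rfl
    · exact absurd hdi hb
  rw [hf]
  simp [wt]

lemma paths_ne {n : ℕ} {c c' : Fin n → Bool}
    (hg : good (ext n c) n) (hg' : good (ext n c') n) (hne : c ≠ c') :
    ∃ i, i ≤ n ∧ pos 0 (ext n c) i ≠ pos 0 (ext n c') i := by
  have hex : ∃ i, i < n ∧ ext n c i ≠ ext n c' i := by
    by_contra hcon
    push_neg at hcon
    apply hne
    funext j
    have h := hcon j j.isLt
    simpa [ext, j.isLt] using h
  classical
  let N := Nat.find hex
  have hN : N < n ∧ ext n c N ≠ ext n c' N := Nat.find_spec hex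
  have hmin : ∀ j, j < N → ext n c j = ext n c' j := by
    intro j hj
    have h := Nat.find_min hex hj
    push_neg at h
    by_cases hjn : j < n
    · exact h hjn
    · simp [ext, hjn]
  have hpos : pos 0 (ext n c) N = pos 0 (ext n c') N := pos_congr 0 _ _ N hmin
  refine ⟨N+1, by omega, ?_⟩
  rw [pos_succ, pos_succ, ← hpos]
  have hxne : pos 0 (ext n c) N ≠ 0 := by
    intro h0
    have ht : ext n c N = true := hg N hN.1 h0
    have ht' : ext n c' N = true := hg' N hN.1 (hpos ▸ h0)
    exact hN.2 (ht.trans ht'.symm)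
  intro heq
  apply hN.2
  cases hb : ext n c N <;> cases hb' : ext n c' N <;>
    simp_all [upd, hxne] <;> omega

end Meas

end HPaux

/-- For the walk conditioned to stay positive started at `0`, with
`Z_n = max{X_1, …, X_n}`: for every `k ≥ 1`, `P(X_n ≥ k) ≥ (1/2) P(Z_n ≥ 2k)`. -/
theorem h_process_max_vs_endpoint
    {Ω : Type*} [MeasurableSpace Ω] (P : Measure Ω) [IsProbabilityMeasure P]
    (X : ℕ → Ω → ℤ) (hX : IsHProcess P X 0)
    (n k : ℕ) (hn : 1 ≤ n) (hk : 1 ≤ k) :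
    (1/2) * P {ω | (2 * k : ℤ) ≤
        (Finset.Icc 1 n).sup' (Finset.nonempty_Icc.mpr hn) (fun j => X j ω)}
      ≤ P {ω | (k : ℤ) ≤ X n ω} := by
  classical
  open HPaux in
  set Emax : Set Ω := {ω | (2 * k : ℤ) ≤
      (Finset.Icc 1 n).sup' (Finset.nonempty_Icc.mpr hn) (fun j => X j ω)} with hEmaxdef
  set Eend : Set Ω := {ω | (k : ℤ) ≤ X n ω} with hEenddef
  have hkZ : (1:ℤ) ≤ (k:ℤ) := by exact_mod_cast hk
  have h2k : (2 * k : ℤ) = 2 * (k:ℤ) := by push_cast; ring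
  -- the finite family of canonical driving-bit vectors
  set G : Finset (Fin n → Bool) :=
    Finset.univ.filter (fun c => HPaux.good (HPaux.ext n c) n) with hG
  have hGgood : ∀ c ∈ G, HPaux.good (HPaux.ext n c) n := by
    intro c hc; exact (Finset.mem_filter.mp hc).2
  -- path and cylinder of c
  set sp : (Fin n → Bool) → ℕ → ℤ := fun c i => HPaux.pos 0 (HPaux.ext n c) i with hsp
  set cy : (Fin n → Bool) → Set Ω := fun c => HPaux.cyl X (sp c) n with hcy
  have hcyP : ∀ c ∈ G, P (cy c) = ENNReal.ofReal (HPaux.W 0 (HPaux.ext n c) n) := by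
    intro c hc
    exact HPaux.cylP P hX (HPaux.ext n c) n (hGgood c hc)
  have hmeasc : ∀ c ∈ G, MeasurableSet (cy c) := by
    intro c _
    exact HPaux.cyl_meas hX.meas _ n
  have hdisj : (G : Set (Fin n → Bool)).PairwiseDisjoint cy := by
    intro c hc c' hc' hne
    obtain ⟨i, hi, hne'⟩ := HPaux.paths_ne (hGgood c (by exact hc)) (hGgood c' (by exact hc')) hne
    show Disjoint (cy c) (cy c')
    rw [Set.disjoint_left]
    intro ω hω hω'
    have h1 : ∀ i, i ≤ n → X i ω = sp c i := hω
    have h2 : ∀ i, i ≤ n → X i ω = sp c' i := hω'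
    exact hne' ((h1 i hi).symm.trans (h2 i hi))
  set T : Set Ω := ⋃ c ∈ G, cy c with hTdef
  have hTmeas : MeasurableSet T := by
    apply MeasurableSet.biUnion (Finset.countable_toSet G)
    intro c hc; exact hmeasc c hc
  have hT : P T = 1 := by
    rw [hTdef, measure_biUnion_finset hdisj hmeasc, Finset.sum_congr rfl hcyP,
      ← ENNReal.ofReal_sum_of_nonneg (fun c _ => HPaux.W_nonneg le_rfl _ n)]
    have hsub : ∑ c ∈ G, HPaux.W 0 (HPaux.ext n c) n
        = ∑ c : Fin n → Bool, HPaux.W 0 (HPaux.ext n c) n := by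
      apply Finset.sum_subset (Finset.subset_univ G)
      intro c _ hc
      apply HPaux.W_of_not_good
      intro hg
      exact hc (Finset.mem_filter.mpr ⟨Finset.mem_univ _, hg⟩)
    rw [hsub, HPaux.sumW le_rfl n, ENNReal.ofReal_one]
  have hTc : P Tᶜ = 0 := by
    rw [measure_compl hTmeas (measure_ne_top P T), hT, measure_univ, tsub_self]
  -- reach characterization on a cylinder
  have hreach_iff : ∀ c, ∀ ω ∈ cy c,
      (ω ∈ Emax ↔ HPaux.reach (2 * (k:ℤ)) 0 (HPaux.ext n c) n = true) := by
    intro c ω hω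
    rw [HPaux.reach_iff]
    constructor
    · intro hm
      rw [hEmaxdef, Set.mem_setOf_eq, Finset.le_sup'_iff] at hm
      obtain ⟨j, hj, hle⟩ := hm
      have hj' : j ≤ n := (Finset.mem_Icc.mp hj).2
      refine ⟨j, hj', ?_⟩
      have h1 : ∀ i, i ≤ n → X i ω = sp c i := hω
      have hle2 : (2 * k : ℤ) ≤ X j ω := hle
      rw [h2k, h1 j hj'] at hle2
      exact hle2
    · rintro ⟨j, hj, hle⟩
      have hj1 : 1 ≤ j := by
        rcases Nat.eq_zero_or_pos j with rfl | h
        · exfalso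
          have : HPaux.pos 0 (HPaux.ext n c) 0 = 0 := rfl
          rw [this] at hle
          omega
        · omega
      rw [hEmaxdef, Set.mem_setOf_eq, Finset.le_sup'_iff]
      refine ⟨j, Finset.mem_Icc.mpr ⟨hj1, hj⟩, ?_⟩
      have h1 : ∀ i, i ≤ n → X i ω = sp c i := hω
      show (2 * k : ℤ) ≤ X j ω
      rw [h2k, h1 j hj]
      exact hle
  -- upper bound for Emax
  have hB : P Emax ≤ ENNReal.ofReal (HPaux.Bf (2*(k:ℤ)) n 0) := by
    have h1 : Emax ⊆ (Emax ∩ T) ∪ Tᶜ := by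
      intro ω hω
      by_cases h : ω ∈ T
      · exact Or.inl ⟨hω, h⟩
      · exact Or.inr h
    have h2 : P Emax ≤ P (Emax ∩ T) + P Tᶜ :=
      le_trans (measure_mono h1) (measure_union_le _ _)
    rw [hTc, add_zero] at h2
    have h3 : Emax ∩ T = ⋃ c ∈ G, (Emax ∩ cy c) := by
      rw [hTdef, Set.inter_iUnion₂]
    have h4 : P (Emax ∩ T) ≤ ∑ c ∈ G, P (Emax ∩ cy c) := by
      rw [h3]
      exact measure_biUnion_finset_le _ _
    have h5 : ∀ c ∈ G, P (Emax ∩ cy c)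
        ≤ (if HPaux.reach (2*(k:ℤ)) 0 (HPaux.ext n c) n
            then ENNReal.ofReal (HPaux.W 0 (HPaux.ext n c) n) else 0) := by
      intro c hc
      by_cases hr : HPaux.reach (2*(k:ℤ)) 0 (HPaux.ext n c) n = true
      · rw [if_pos hr, ← hcyP c hc]
        exact measure_mono Set.inter_subset_right
      · have : Emax ∩ cy c = ∅ := by
          ext ω
          simp only [Set.mem_inter_iff, Set.mem_empty_iff_false, iff_false, not_and]
          intro hω hωc
          exact hr ((hreach_iff c ω hωc).mp hω)
        rw [this, measure_empty]
        simp [hr]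
    have h6 : ∑ c ∈ G, P (Emax ∩ cy c)
        ≤ ∑ c ∈ G, (if HPaux.reach (2*(k:ℤ)) 0 (HPaux.ext n c) n
            then ENNReal.ofReal (HPaux.W 0 (HPaux.ext n c) n) else 0) :=
      Finset.sum_le_sum h5
    have h7 : ∑ c ∈ G, (if HPaux.reach (2*(k:ℤ)) 0 (HPaux.ext n c) n
            then ENNReal.ofReal (HPaux.W 0 (HPaux.ext n c) n) else 0)
        = ENNReal.ofReal (HPaux.Bf (2*(k:ℤ)) n 0) := by
      have e1 : ∀ c : Fin n → Bool,
          (if HPaux.reach (2*(k:ℤ)) 0 (HPaux.ext n c) n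
            then ENNReal.ofReal (HPaux.W 0 (HPaux.ext n c) n) else 0)
          = ENNReal.ofReal (if HPaux.reach (2*(k:ℤ)) 0 (HPaux.ext n c) n
            then HPaux.W 0 (HPaux.ext n c) n else 0) := by
        intro c
        by_cases hr : HPaux.reach (2*(k:ℤ)) 0 (HPaux.ext n c) n = true <;>
          simp [hr]
      rw [Finset.sum_congr rfl (fun c _ => e1 c),
        ← ENNReal.ofReal_sum_of_nonneg]
      · congr 1
        have hsub : ∑ c ∈ G, (if HPaux.reach (2*(k:ℤ)) 0 (HPaux.ext n c) n
              then HPaux.W 0 (HPaux.ext n c) n else 0)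
            = ∑ c : Fin n → Bool, (if HPaux.reach (2*(k:ℤ)) 0 (HPaux.ext n c) n
              then HPaux.W 0 (HPaux.ext n c) n else 0) := by
          apply Finset.sum_subset (Finset.subset_univ G)
          intro c _ hc
          have hw : HPaux.W 0 (HPaux.ext n c) n = 0 := by
            apply HPaux.W_of_not_good
            intro hg
            exact hc (Finset.mem_filter.mpr ⟨Finset.mem_univ _, hg⟩)
          simp [hw]
        rw [hsub, HPaux.sumB (2*(k:ℤ)) le_rfl n]
      · intro c _
        split
        · exact HPaux.W_nonneg le_rfl _ n
        · exact le_rfl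
    calc P Emax ≤ P (Emax ∩ T) := h2
      _ ≤ _ := h4
      _ ≤ _ := h6
      _ = _ := h7
  -- lower bound for Eend
  have hA : ENNReal.ofReal (HPaux.A (k:ℤ) n 0) ≤ P Eend := by
    set G' : Finset (Fin n → Bool) :=
      G.filter (fun c => (k:ℤ) ≤ HPaux.pos 0 (HPaux.ext n c) n) with hG'
    have hsubG : G' ⊆ G := Finset.filter_subset _ _
    have hsub' : (⋃ c ∈ G', cy c) ⊆ Eend := by
      intro ω hω
      rw [Set.mem_iUnion₂] at hω
      obtain ⟨c, hc, hωc⟩ := hω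
      have h1 : ∀ i, i ≤ n → X i ω = sp c i := hωc
      rw [hEenddef, Set.mem_setOf_eq, h1 n le_rfl]
      exact (Finset.mem_filter.mp hc).2
    have hle1 : P (⋃ c ∈ G', cy c) ≤ P Eend := measure_mono hsub'
    have heq : P (⋃ c ∈ G', cy c) = ∑ c ∈ G', P (cy c) := by
      apply measure_biUnion_finset (hdisj.subset (by exact_mod_cast Finset.coe_subset.mpr hsubG))
      intro c hc; exact hmeasc c (hsubG hc)
    have heq2 : ∑ c ∈ G', P (cy c) = ENNReal.ofReal (HPaux.A (k:ℤ) n 0) := by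
      rw [Finset.sum_congr rfl (fun c hc => hcyP c (hsubG hc)),
        ← ENNReal.ofReal_sum_of_nonneg (fun c _ => HPaux.W_nonneg le_rfl _ n)]
      congr 1
      have e2 : ∑ c ∈ G', HPaux.W 0 (HPaux.ext n c) n
          = ∑ c ∈ G', (if (k:ℤ) ≤ HPaux.pos 0 (HPaux.ext n c) n
              then HPaux.W 0 (HPaux.ext n c) n else 0) := by
        apply Finset.sum_congr rfl
        intro c hc
        rw [if_pos (Finset.mem_filter.mp hc).2]
      have e3 : ∑ c ∈ G', (if (k:ℤ) ≤ HPaux.pos 0 (HPaux.ext n c) n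
              then HPaux.W 0 (HPaux.ext n c) n else 0)
          = ∑ c : Fin n → Bool, (if (k:ℤ) ≤ HPaux.pos 0 (HPaux.ext n c) n
              then HPaux.W 0 (HPaux.ext n c) n else 0) := by
        apply Finset.sum_subset (Finset.subset_univ G')
        intro c _ hc
        by_cases hkc : (k:ℤ) ≤ HPaux.pos 0 (HPaux.ext n c) n
        · rw [if_pos hkc]
          by_cases hgc : HPaux.good (HPaux.ext n c) n
          · exfalso
            apply hc
            rw [hG']
            refine Finset.mem_filter.mpr ⟨?_, hkc⟩
            exact Finset.mem_filter.mpr ⟨Finset.mem_univ _, hgc⟩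
          · exact HPaux.W_of_not_good _ hgc
        · rw [if_neg hkc]
      rw [e2, e3, HPaux.sumA (k:ℤ) le_rfl n]
    calc ENNReal.ofReal (HPaux.A (k:ℤ) n 0) = ∑ c ∈ G', P (cy c) := heq2.symm
      _ = P (⋃ c ∈ G', cy c) := heq.symm
      _ ≤ P Eend := hle1
  -- combine
  have hBA : HPaux.Bf (2*(k:ℤ)) n 0 ≤ 2 * HPaux.A (k:ℤ) n 0 :=
    HPaux.B_le_two_A (k:ℤ) hkZ n le_rfl
  calc (1/2) * P Emax ≤ (1/2) * ENNReal.ofReal (HPaux.Bf (2*(k:ℤ)) n 0) := by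
        exact mul_le_mul_right hB _
    _ ≤ (1/2) * ENNReal.ofReal (2 * HPaux.A (k:ℤ) n 0) := by
        exact mul_le_mul_right (ENNReal.ofReal_le_ofReal hBA) _
    _ = ENNReal.ofReal (HPaux.A (k:ℤ) n 0) := by
        rw [ENNReal.ofReal_mul (by norm_num : (0:ℝ) ≤ 2)]
        rw [show ENNReal.ofReal (2:ℝ) = 2 by simp]
        rw [← mul_assoc, one_div, ENNReal.inv_mul_cancel (by norm_num) (by norm_num), one_mul]
    _ ≤ P Eend := hA
end

section
/- Let X be the simple symmetric random walk conditioned to stay positive, started at 0, and Z_n = max{X_1,...,X_n}. Then E[Z_n] ≤ 1 + 4 E[X_n]. -/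
open MeasureTheory ProbabilityTheory Finset

set_option linter.unusedSectionVars false
set_option linter.unusedVariables false

section
variable {Ω : Type*} [MeasurableSpace Ω]

def cylSet (X : ℕ → Ω → ℤ) (j : ℕ) (s : ℕ → ℤ) : Set Ω :=
  {ω | ∀ i, i ≤ j → X i ω = s i}

lemma measurableSet_cyl {X : ℕ → Ω → ℤ} (hX : ∀ n, Measurable (X n)) (j : ℕ) (s : ℕ → ℤ) :
    MeasurableSet (cylSet X j s) := by
  have : cylSet X j s = ⋂ i ∈ Finset.Iic j, (X i) ⁻¹' {s i} := by
    ext ω; simp [cylSet]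
  rw [this]
  exact MeasurableSet.biInter (Set.to_countable _)
    (fun i _ => (hX i) (measurableSet_singleton _))

lemma cyl_succ_eq (X : ℕ → Ω → ℤ) (j : ℕ) (s : ℕ → ℤ) (a : ℤ) :
    {ω | X (j+1) ω = a ∧ ∀ i, i ≤ j → X i ω = s i}
      = cylSet X (j+1) (Function.update s (j+1) a) := by
  ext ω
  constructor
  · rintro ⟨h1, h2⟩ i hi
    rcases Nat.lt_succ_iff_lt_or_eq.mp (Nat.lt_succ_of_le hi) with h | h
    · rw [Function.update_of_ne (by omega)]; exact h2 i (by omega)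
    · subst h; rw [Function.update_self]; exact h1
  · intro h
    refine ⟨by simpa using h (j+1) le_rfl, fun i hi => ?_⟩
    have := h i (by omega)
    rwa [Function.update_of_ne (by omega)] at this

variable {P : Measure Ω} [IsProbabilityMeasure P] {X : ℕ → Ω → ℤ}

lemma cyl_up (hX : IsHProcess P X 0) (j : ℕ) (s : ℕ → ℤ) (hs : 1 ≤ s j) :
    P (cylSet X (j+1) (Function.update s (j+1) (s j + 1)))
      = ENNReal.ofReal (((s j : ℝ) + 1) / (2 * (s j : ℝ))) * P (cylSet X j s) := by
  rw [← cyl_succ_eq]; exact hX.step_up j s hs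

lemma cyl_down (hX : IsHProcess P X 0) (j : ℕ) (s : ℕ → ℤ) (hs : 1 ≤ s j) :
    P (cylSet X (j+1) (Function.update s (j+1) (s j - 1)))
      = ENNReal.ofReal (((s j : ℝ) - 1) / (2 * (s j : ℝ))) * P (cylSet X j s) := by
  rw [← cyl_succ_eq]; exact hX.step_down j s hs

lemma cyl_up_down_sum (hX : IsHProcess P X 0) (j : ℕ) (s : ℕ → ℤ) (hs : 1 ≤ s j) :
    P (cylSet X (j+1) (Function.update s (j+1) (s j + 1)))
      + P (cylSet X (j+1) (Function.update s (j+1) (s j - 1)))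
      = P (cylSet X j s) := by
  rw [cyl_up hX j s hs, cyl_down hX j s hs, ← add_mul, ← ENNReal.ofReal_add, ← add_div]
  · have h1 : (1:ℝ) ≤ (s j : ℝ) := by exact_mod_cast hs
    have h2 : (2 * (s j : ℝ)) ≠ 0 := by positivity
    have : ((s j : ℝ) + 1 + ((s j : ℝ) - 1)) = 2 * (s j : ℝ) := by ring
    rw [this, div_self h2, ENNReal.ofReal_one, one_mul]
  · have h1 : (1:ℝ) ≤ (s j : ℝ) := by exact_mod_cast hs
    positivity
  · have h1 : (1:ℝ) ≤ (s j : ℝ) := by exact_mod_cast hs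
    have : (0:ℝ) ≤ (s j : ℝ) - 1 := by linarith
    positivity

end
set_option linter.unusedSectionVars false

section
variable {Ω : Type*} [MeasurableSpace Ω]

/-- One-step good behaviour at time `m`. -/
def stepGood (X : ℕ → Ω → ℤ) (m : ℕ) : Set Ω :=
  {ω | (2 ≤ X m ω → X (m+1) ω = X m ω + 1 ∨ X (m+1) ω = X m ω - 1) ∧
       (X m ω = 1 → X (m+1) ω = 2) ∧ (X m ω = 0 → X (m+1) ω = 1)}

/-- Good paths up to time `N`. -/
def goodSet (X : ℕ → Ω → ℤ) (N : ℕ) : Set Ω :=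
  {ω | X 0 ω = 0 ∧ ∀ m, m < N → ω ∈ stepGood X m}

lemma goodSet_bounds {X : ℕ → Ω → ℤ} {N : ℕ} {ω : Ω} (h : ω ∈ goodSet X N) :
    ∀ m, m ≤ N → 0 ≤ X m ω ∧ X m ω ≤ m ∧ (1 ≤ m → 1 ≤ X m ω) := by
  intro m
  induction m with
  | zero => intro _; simp [h.1]
  | succ m ih =>
    intro hm
    obtain ⟨h0, h1, h2⟩ := ih (by omega)
    obtain ⟨g1, g2, g3⟩ := h.2 m (by omega)
    rcases lt_or_ge (X m ω) 2 with hc | hc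
    · interval_cases hxm : X m ω
      · have := g3 rfl; omega
      · have := g2 rfl
        have : (1:ℤ) ≤ m := by omega
        omega
    · rcases g1 hc with h' | h' <;> omega

lemma goodSet_step_le {X : ℕ → Ω → ℤ} {N : ℕ} {ω : Ω} (h : ω ∈ goodSet X N) {m : ℕ}
    (hm : m < N) : X (m+1) ω ≤ X m ω + 1 := by
  obtain ⟨h0, -, -⟩ := goodSet_bounds h m (by omega)
  obtain ⟨g1, g2, g3⟩ := h.2 m hm
  rcases lt_or_ge (X m ω) 2 with hc | hc
  · interval_cases hxm : X m ω
    · have := g3 rfl; omega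
    · have := g2 rfl; omega
  · rcases g1 hc with h' | h' <;> omega

def extFin {N : ℕ} (v : Fin (N+1) → ℤ) : ℕ → ℤ :=
  fun i => if h : i < N+1 then v ⟨i, h⟩ else 0

end
section
variable {Ω : Type*} [MeasurableSpace Ω]

lemma cyl_succ_subset (X : ℕ → Ω → ℤ) (j : ℕ) (s : ℕ → ℤ) (a : ℤ) :
    cylSet X (j+1) (Function.update s (j+1) a) ⊆ cylSet X j s := by
  intro ω h i hi
  have := h i (by omega)
  rwa [Function.update_of_ne (by omega)] at this

variable {P : Measure Ω} [IsProbabilityMeasure P] {X : ℕ → Ω → ℤ}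

lemma diff_null {A B : Set Ω} (hB : MeasurableSet B) (hBA : B ⊆ A) (h : P B = P A) :
    P (A \ B) = 0 := by
  rw [measure_diff hBA hB.nullMeasurableSet (measure_ne_top P B), h, tsub_self]

lemma cyl_zero (hX : IsHProcess P X 0) (j : ℕ) (s : ℕ → ℤ) (hs : s j = 0) :
    P (cylSet X (j+1) (Function.update s (j+1) 1)) = P (cylSet X j s) := by
  rw [← cyl_succ_eq]; exact hX.step_zero j s hs

lemma stepGood_null (hX : IsHProcess P X 0) (j : ℕ) (s : ℕ → ℤ) (hs : 0 ≤ s j) :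
    P (cylSet X j s ∩ (stepGood X j)ᶜ) = 0 := by
  have hmc := measurableSet_cyl hX.meas
  rcases lt_or_ge (s j) 2 with hc | hc
  · rcases (by omega : s j = 0 ∨ s j = 1) with hs0 | hs1
    · refine measure_mono_null ?_
        (diff_null (hmc _ _) (cyl_succ_subset X j s 1) (cyl_zero hX j s hs0))
      rintro ω ⟨hc', hbad⟩
      refine ⟨hc', fun hE' => hbad ?_⟩
      have hXj : X j ω = s j := hc' j le_rfl
      have hXj1 : X (j+1) ω = 1 := by
        have := hE' (j+1) le_rfl; rwa [Function.update_self] at this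
      exact ⟨fun h2 => absurd h2 (by omega), fun h1 => by omega, fun _ => hXj1⟩
    · have hE : P (cylSet X (j+1) (Function.update s (j+1) (s j + 1)))
          = P (cylSet X j s) := by
        rw [cyl_up hX j s (by omega), hs1]
        norm_num
      refine measure_mono_null ?_
        (diff_null (hmc _ _) (cyl_succ_subset X j s _) hE)
      rintro ω ⟨hc', hbad⟩
      refine ⟨hc', fun hE' => hbad ?_⟩
      have hXj : X j ω = s j := hc' j le_rfl
      have hXj1 : X (j+1) ω = s j + 1 := by
        have := hE' (j+1) le_rfl; rwa [Function.update_self] at this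
      exact ⟨fun h2 => absurd h2 (by omega), fun _ => by omega, fun h0 => by omega⟩
  · have hdisj : Disjoint (cylSet X (j+1) (Function.update s (j+1) (s j + 1)))
        (cylSet X (j+1) (Function.update s (j+1) (s j - 1))) := by
      rw [Set.disjoint_left]
      intro ω hU hD
      have h1 := hU (j+1) le_rfl
      have h2 := hD (j+1) le_rfl
      rw [Function.update_self] at h1 h2
      omega
    have hsum : P (cylSet X (j+1) (Function.update s (j+1) (s j + 1))
          ∪ cylSet X (j+1) (Function.update s (j+1) (s j - 1))) = P (cylSet X j s) := by
      rw [measure_union hdisj (hmc _ _)]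
      exact cyl_up_down_sum hX j s (by omega)
    have hsub : cylSet X (j+1) (Function.update s (j+1) (s j + 1))
          ∪ cylSet X (j+1) (Function.update s (j+1) (s j - 1)) ⊆ cylSet X j s := by
      rintro ω (h | h)
      · exact cyl_succ_subset X j s _ h
      · exact cyl_succ_subset X j s _ h
    refine measure_mono_null ?_ (diff_null ((hmc _ _).union (hmc _ _)) hsub hsum)
    rintro ω ⟨hc', hbad⟩
    refine ⟨hc', fun hE' => hbad ?_⟩
    have hXj : X j ω = s j := hc' j le_rfl
    rcases hE' with h | h
    · have hXj1 : X (j+1) ω = s j + 1 := by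
        have := h (j+1) le_rfl; rwa [Function.update_self] at this
      exact ⟨fun _ => Or.inl (by omega), fun h1 => by omega, fun h0 => by omega⟩
    · have hXj1 : X (j+1) ω = s j - 1 := by
        have := h (j+1) le_rfl; rwa [Function.update_self] at this
      exact ⟨fun _ => Or.inr (by omega), fun h1 => by omega, fun h0 => by omega⟩

lemma ae_goodSet (hX : IsHProcess P X 0) : ∀ N, P ((goodSet X N)ᶜ) = 0 := by
  intro N
  induction N with
  | zero =>
    refine measure_mono_null ?_ (ae_iff.mp hX.start)
    intro ω hω
    simp only [goodSet, Set.mem_compl_iff, Set.mem_setOf_eq] at hω ⊢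
    intro h0
    exact hω ⟨h0, fun m hm => absurd hm (by omega)⟩
  | succ N ih =>
    have hsub : (goodSet X (N+1))ᶜ ⊆ (goodSet X N)ᶜ ∪ (goodSet X N ∩ (stepGood X N)ᶜ) := by
      intro ω hω
      by_cases hg : ω ∈ goodSet X N
      · right
        refine ⟨hg, fun hstep => hω ⟨hg.1, fun m hm => ?_⟩⟩
        rcases Nat.lt_succ_iff_lt_or_eq.mp hm with h | h
        · exact hg.2 m h
        · subst h; exact hstep
      · left; exact hg
    refine measure_mono_null hsub (measure_union_null ih ?_)
    have hsub2 : goodSet X N ∩ (stepGood X N)ᶜ ⊆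
        ⋃ (v : {v : Fin (N+1) → ℤ // 0 ≤ v (Fin.last N)}),
          (cylSet X N (extFin v.1) ∩ (stepGood X N)ᶜ) := by
      rintro ω ⟨hg, hbad⟩
      have hpos : (0:ℤ) ≤ (fun i : Fin (N+1) => X (i:ℕ) ω) (Fin.last N) := by
        simpa using (goodSet_bounds hg N le_rfl).1
      refine Set.mem_iUnion.mpr ⟨⟨fun i => X (i:ℕ) ω, hpos⟩, ?_, hbad⟩
      intro i hi
      simp only [extFin, dif_pos (Nat.lt_succ_of_le hi)]
    refine measure_mono_null hsub2 (measure_iUnion_null fun v => ?_)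
    refine stepGood_null hX N (extFin v.1) ?_
    have := v.2
    simpa only [extFin, dif_pos (Nat.lt_succ_self N), Fin.last] using this
end
section
variable {Ω : Type*} [MeasurableSpace Ω]
variable {P : Measure Ω} [IsProbabilityMeasure P] {X : ℕ → Ω → ℤ}

lemma int_inv_abs_le (z : ℤ) : |1 / (z : ℝ)| ≤ 1 := by
  rcases eq_or_ne z 0 with h | h
  · simp [h]
  · have h1 : (1:ℝ) ≤ |(z:ℝ)| := by
      have : (1:ℤ) ≤ |z| := by
        rcases h.lt_or_gt with hl | hl
        · rw [abs_of_neg hl]; omega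
        · rw [abs_of_pos hl]; omega
      calc (1:ℝ) ≤ (|z| : ℤ) := by exact_mod_cast this
        _ = |(z:ℝ)| := by push_cast; ring
    rw [abs_div, abs_one]
    rw [div_le_one (by linarith)]
    exact h1

lemma inv_meas (hX : ∀ n, Measurable (X n)) (m : ℕ) :
    Measurable (fun ω => 1 / ((X m ω : ℝ))) := by
  exact Measurable.comp (f := X m) (g := fun z : ℤ => 1 / (z:ℝ))
    (measurable_from_top) (hX m)

lemma inv_integrable (hX : ∀ n, Measurable (X n)) (m : ℕ) (S : Set Ω)
    (hS : MeasurableSet S) :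
    Integrable (S.indicator (fun ω => 1 / ((X m ω : ℝ)))) P := by
  refine (Integrable.indicator ?_ hS)
  refine ⟨(inv_meas hX m).aestronglyMeasurable, ?_⟩
  refine HasFiniteIntegral.of_bounded (C := 1) (ae_of_all _ fun ω => ?_)
  rw [Real.norm_eq_abs]
  exact int_inv_abs_le (X m ω)

lemma null_indicator_integral {S : Set Ω} (hS : P S = 0) (f : Ω → ℝ) :
    ∫ ω, S.indicator f ω ∂P = 0 := by
  have h : S.indicator f =ᵐ[P] (0 : Ω → ℝ) := by
    filter_upwards [measure_eq_zero_iff_ae_notMem.mp hS] with ω hω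
    simp [Set.indicator_of_notMem hω]
  rw [integral_congr_ae h]
  simp

lemma mart (hX : IsHProcess P X 0) :
    ∀ (d j : ℕ) (s : ℕ → ℤ), 1 ≤ s j →
      ∫ ω, (cylSet X j s).indicator (fun ω' => 1 / ((X (j+d) ω' : ℝ))) ω ∂P
        ≤ (P (cylSet X j s)).toReal / (s j : ℝ) := by
  intro d
  induction d with
  | zero =>
    intro j s hs
    simp only [Nat.add_zero]
    have he : (cylSet X j s).indicator (fun ω' => 1 / ((X j ω' : ℝ)))
        = (cylSet X j s).indicator (fun _ => 1 / ((s j : ℝ))) := by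
      funext ω
      by_cases h : ω ∈ cylSet X j s
      · rw [Set.indicator_of_mem h, Set.indicator_of_mem h, h j le_rfl]
      · rw [Set.indicator_of_notMem h, Set.indicator_of_notMem h]
    rw [he, integral_indicator_const _ (measurableSet_cyl hX.meas j s)]
    rw [smul_eq_mul]
    rw [mul_one_div]
    exact le_rfl
  | succ d ih =>
    intro j s hs
    have hidx : j + (d+1) = (j+1) + d := by omega
    rw [hidx]
    set f : Ω → ℝ := fun ω' => 1 / ((X ((j+1)+d) ω' : ℝ)) with hf
    set A := cylSet X j s
    set U := cylSet X (j+1) (Function.update s (j+1) (s j + 1)) with hU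
    set D := cylSet X (j+1) (Function.update s (j+1) (s j - 1)) with hD
    have hmc := measurableSet_cyl hX.meas
    have hUA : U ⊆ A := cyl_succ_subset X j s _
    have hDA : D ⊆ A := cyl_succ_subset X j s _
    have hdisj : Disjoint U D := by
      rw [Set.disjoint_left]
      intro ω hU' hD'
      have h1 := hU' (j+1) le_rfl
      have h2 := hD' (j+1) le_rfl
      rw [Function.update_self] at h1 h2
      omega
    have hRnull : P (A \ (U ∪ D)) = 0 := by
      refine diff_null ((hmc _ _).union (hmc _ _)) ?_ ?_
      · rintro ω (h | h)
        · exact hUA h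
        · exact hDA h
      · rw [measure_union hdisj (hmc _ _)]
        exact cyl_up_down_sum hX j s hs
    have hsplit : A.indicator f
        = fun ω => U.indicator f ω + D.indicator f ω + (A \ (U ∪ D)).indicator f ω := by
      funext ω
      by_cases hA : ω ∈ A
      · by_cases hU' : ω ∈ U
        · have hD' : ω ∉ D := fun h => (Set.disjoint_left.mp hdisj hU') h
          have hR : ω ∉ A \ (U ∪ D) := fun h => h.2 (Or.inl hU')
          simp [Set.indicator_of_mem, Set.indicator_of_notMem, hA, hU', hD', hR]
        · by_cases hD' : ω ∈ D
          · have hR : ω ∉ A \ (U ∪ D) := fun h => h.2 (Or.inr hD')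
            simp [Set.indicator_of_mem, Set.indicator_of_notMem, hA, hU', hD', hR]
          · have hR : ω ∈ A \ (U ∪ D) := ⟨hA, fun h => by rcases h with h|h; exact hU' h; exact hD' h⟩
            simp [Set.indicator_of_mem, Set.indicator_of_notMem, hA, hU', hD', hR]
      · have hU' : ω ∉ U := fun h => hA (hUA h)
        have hD' : ω ∉ D := fun h => hA (hDA h)
        have hR : ω ∉ A \ (U ∪ D) := fun h => hA h.1
        simp [Set.indicator_of_notMem, hA, hU', hD', hR]
    have heq : ∫ ω, A.indicator f ω ∂P
        = ∫ ω, (U.indicator f ω + D.indicator f ω + (A \ (U ∪ D)).indicator f ω) ∂P :=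
      integral_congr_ae (Filter.EventuallyEq.of_eq (by funext ω; exact congrFun hsplit ω))
    have i1 : Integrable (U.indicator f) P := inv_integrable hX.meas _ _ (hmc _ _)
    have i2 : Integrable (D.indicator f) P := inv_integrable hX.meas _ _ (hmc _ _)
    have i3 : Integrable ((A \ (U ∪ D)).indicator f) P :=
      inv_integrable hX.meas _ _ ((hmc _ _).diff ((hmc _ _).union (hmc _ _)))
    have e1 := integral_add (i1.add i2) i3 (μ := P)
    simp only [Pi.add_apply] at e1
    have e2 := integral_add i1 i2 (μ := P)
    rw [heq, e1, e2]
    rw [null_indicator_integral hRnull, add_zero]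
    have hIU : ∫ ω, U.indicator f ω ∂P ≤ (P U).toReal / ((s j : ℝ) + 1) := by
      have h1 : (1:ℤ) ≤ Function.update s (j+1) (s j + 1) (j+1) := by
        rw [Function.update_self]; omega
      have := ih (j+1) (Function.update s (j+1) (s j + 1)) h1
      rw [Function.update_self] at this
      push_cast at this
      rw [hU]
      exact this
    have hPU : (P U).toReal = (((s j : ℝ) + 1) / (2 * (s j : ℝ))) * (P A).toReal := by
      rw [hU, cyl_up hX j s hs, ENNReal.toReal_mul, ENNReal.toReal_ofReal]
      have h1 : (1:ℝ) ≤ (s j : ℝ) := by exact_mod_cast hs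
      positivity
    rcases eq_or_lt_of_le hs with hs1 | hs2
    · -- s j = 1
      have hs1' : s j = 1 := hs1.symm
      have hDnull : P D = 0 := by
        rw [hD, cyl_down hX j s hs, hs1']
        norm_num
      rw [null_indicator_integral hDnull, add_zero]
      have h1 : (1:ℝ) ≤ (s j : ℝ) := by exact_mod_cast hs
      calc ∫ ω, U.indicator f ω ∂P ≤ (P U).toReal / ((s j : ℝ) + 1) := hIU
        _ = ((((s j:ℝ)+1)/(2*(s j:ℝ))) * (P A).toReal) / ((s j : ℝ) + 1) := by rw [hPU]
        _ = (P A).toReal / (2 * (s j : ℝ)) := by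
            field_simp
        _ ≤ (P A).toReal / (s j : ℝ) := by
            apply div_le_div_of_nonneg_left ENNReal.toReal_nonneg (by linarith) (by linarith)
    · -- 2 ≤ s j
      have h2 : (2:ℝ) ≤ (s j : ℝ) := by exact_mod_cast hs2
      have hID : ∫ ω, D.indicator f ω ∂P ≤ (P D).toReal / ((s j : ℝ) - 1) := by
        have h1 : (1:ℤ) ≤ Function.update s (j+1) (s j - 1) (j+1) := by
          rw [Function.update_self]; omega
        have := ih (j+1) (Function.update s (j+1) (s j - 1)) h1
        rw [Function.update_self] at this
        have hc : ((s j - 1 : ℤ) : ℝ) = (s j : ℝ) - 1 := by push_cast; ring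
        rw [hc] at this
        rw [hD]
        exact this
      have hPD : (P D).toReal = (((s j : ℝ) - 1) / (2 * (s j : ℝ))) * (P A).toReal := by
        rw [hD, cyl_down hX j s hs, ENNReal.toReal_mul, ENNReal.toReal_ofReal]
        have h1 : (1:ℝ) ≤ (s j : ℝ) := by exact_mod_cast hs
        have : (0:ℝ) ≤ (s j : ℝ) - 1 := by linarith
        positivity
      have key : (P U).toReal / ((s j : ℝ) + 1) + (P D).toReal / ((s j : ℝ) - 1)
          = (P A).toReal / (s j : ℝ) := by
        rw [hPU, hPD]
        have hsne : (s j : ℝ) ≠ 0 := by linarith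
        have h1' : ((s j:ℝ)+1) ≠ 0 := by linarith
        have h3' : ((s j:ℝ)-1) ≠ 0 := by linarith
        field_simp
        ring
      calc ∫ ω, U.indicator f ω ∂P + ∫ ω, D.indicator f ω ∂P
          ≤ (P U).toReal / ((s j : ℝ) + 1) + (P D).toReal / ((s j : ℝ) - 1) :=
            add_le_add hIU hID
        _ = (P A).toReal / (s j : ℝ) := key
end
section
variable {Ω : Type*} [MeasurableSpace Ω]
variable {P : Measure Ω} [IsProbabilityMeasure P] {X : ℕ → Ω → ℤ}

lemma measurableSet_stepGood (hm : ∀ n, Measurable (X n)) (m : ℕ) :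
    MeasurableSet (stepGood X m) := by
  have : stepGood X m = ⋃ (p : ℤ × ℤ), ⋃ (_ : (2 ≤ p.1 → p.2 = p.1 + 1 ∨ p.2 = p.1 - 1)
      ∧ (p.1 = 1 → p.2 = 2) ∧ (p.1 = 0 → p.2 = 1)),
      ((X m ⁻¹' {p.1}) ∩ (X (m+1) ⁻¹' {p.2})) := by
    ext ω
    simp only [stepGood, Set.mem_setOf_eq, Set.mem_iUnion, Set.mem_inter_iff,
      Set.mem_preimage, Set.mem_singleton_iff]
    constructor
    · intro h
      exact ⟨(X m ω, X (m+1) ω), h, rfl, rfl⟩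
    · rintro ⟨p, hp, h1, h2⟩
      rw [h1, h2]
      exact hp
  rw [this]
  exact MeasurableSet.iUnion fun p => MeasurableSet.iUnion fun _ =>
    ((hm m) (measurableSet_singleton _)).inter ((hm (m+1)) (measurableSet_singleton _))

lemma measurableSet_goodSet (hm : ∀ n, Measurable (X n)) (N : ℕ) :
    MeasurableSet (goodSet X N) := by
  have : goodSet X N = (X 0 ⁻¹' {0}) ∩ ⋂ m ∈ Finset.range N, stepGood X m := by
    ext ω
    simp [goodSet, Set.mem_iInter]
  rw [this]
  exact ((hm 0) (measurableSet_singleton _)).inter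
    (MeasurableSet.biInter (Set.to_countable _) fun m _ => measurableSet_stepGood hm m)

lemma ae_mem_goodSet (hX : IsHProcess P X 0) (N : ℕ) : ∀ᵐ ω ∂P, ω ∈ goodSet X N := by
  rw [ae_iff]
  exact ae_goodSet hX N

lemma markov_cyl (hX : IsHProcess P X 0) {n j : ℕ} (hj1 : 1 ≤ j) (hjn : j ≤ n)
    {k : ℤ} (hk : 1 ≤ k) (s : ℕ → ℤ) (hsj : s j = 2*k) :
    P (cylSet X j s ∩ {ω | X n ω < k}) ≤ 2⁻¹ * P (cylSet X j s) := by
  have hmc := measurableSet_cyl hX.meas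
  set A := cylSet X j s with hA
  set G := goodSet X n with hGdef
  have hGm : MeasurableSet G := measurableSet_goodSet hX.meas n
  have hBm : MeasurableSet (A ∩ {ω | X n ω < k}) :=
    (hmc _ _).inter ((hX.meas n) (by trivial : MeasurableSet {z : ℤ | z < k}))
  have hG : ∀ᵐ ω ∂P, ω ∈ G := ae_mem_goodSet hX n
  -- reduce to intersection with good set
  have hPB : P (A ∩ {ω | X n ω < k}) = P (A ∩ {ω | X n ω < k} ∩ G) := by
    refine (measure_inter_conull ?_).symm
    simpa using ae_goodSet hX n
  -- pointwise bound
  have hpoint : ∀ ω, (A ∩ {ω | X n ω < k} ∩ G).indicator (fun _ => (1:ℝ)) ω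
      ≤ ((k:ℝ) - 1) * (A ∩ {ω | 1 ≤ X n ω}).indicator (fun ω => 1 / (X n ω : ℝ)) ω := by
    intro ω
    by_cases hmem : ω ∈ A ∩ {ω | X n ω < k} ∩ G
    · obtain ⟨⟨hA', hlt⟩, hg⟩ := hmem
      have hx1 : (1:ℤ) ≤ X n ω := (goodSet_bounds hg n le_rfl).2.2 (by omega)
      have hm1 : ω ∈ A ∩ {ω' | X n ω' < k} ∩ G := ⟨⟨hA', hlt⟩, hg⟩
      have hm2 : ω ∈ A ∩ {ω' | 1 ≤ X n ω'} := ⟨hA', hx1⟩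
      rw [Set.indicator_of_mem hm1, Set.indicator_of_mem hm2]
      have hxk : X n ω ≤ k - 1 := by
        have := hlt
        simp only [Set.mem_setOf_eq] at this
        omega
      have hxpos : (0:ℝ) < (X n ω : ℝ) := by exact_mod_cast hx1
      rw [mul_one_div, le_div_iff₀ hxpos, one_mul]
      exact_mod_cast hxk
    · rw [Set.indicator_of_notMem hmem]
      have hk0 : (0:ℝ) ≤ (k:ℝ) - 1 := by
        have : (1:ℝ) ≤ (k:ℝ) := by exact_mod_cast hk
        linarith
      refine mul_nonneg hk0 ?_
      by_cases h2 : ω ∈ A ∩ {ω | 1 ≤ X n ω}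
      · rw [Set.indicator_of_mem h2]
        have : (0:ℝ) < (X n ω : ℝ) := by exact_mod_cast h2.2
        positivity
      · rw [Set.indicator_of_notMem h2]
  -- integrate
  have hint1 : Integrable ((A ∩ {ω | X n ω < k} ∩ G).indicator (fun _ => (1:ℝ))) P :=
    (integrable_const 1).indicator (hBm.inter hGm)
  have hset2 : MeasurableSet (A ∩ {ω | 1 ≤ X n ω}) :=
    (hmc _ _).inter ((hX.meas n) (by trivial : MeasurableSet {z : ℤ | 1 ≤ z}))
  have hint2 : Integrable ((A ∩ {ω | 1 ≤ X n ω}).indicator (fun ω => 1 / (X n ω : ℝ))) P :=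
    inv_integrable hX.meas n _ hset2
  have hstep1 : (P (A ∩ {ω | X n ω < k} ∩ G)).toReal
      ≤ ((k:ℝ) - 1) * ∫ ω, (A ∩ {ω | 1 ≤ X n ω}).indicator (fun ω => 1 / (X n ω : ℝ)) ω ∂P := by
    have := integral_mono hint1 (hint2.const_mul _) hpoint
    rwa [integral_indicator_const _ (hBm.inter hGm), smul_eq_mul, mul_one,
      integral_const_mul] at this
  -- replace truncated indicator by full cylinder indicator (a.e.)
  have hae : (A ∩ {ω | 1 ≤ X n ω}).indicator (fun ω => 1 / (X n ω : ℝ))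
      =ᵐ[P] A.indicator (fun ω => 1 / (X n ω : ℝ)) := by
    filter_upwards [hG] with ω hg
    have hx1 : (1:ℤ) ≤ X n ω := (goodSet_bounds hg n le_rfl).2.2 (by omega)
    by_cases hA' : ω ∈ A
    · have hm2 : ω ∈ A ∩ {ω' | 1 ≤ X n ω'} := ⟨hA', hx1⟩
      rw [Set.indicator_of_mem hm2, Set.indicator_of_mem hA']
    · rw [Set.indicator_of_notMem (fun h => hA' h.1), Set.indicator_of_notMem hA']
  have hstep2 : ∫ ω, (A ∩ {ω | 1 ≤ X n ω}).indicator (fun ω => 1 / (X n ω : ℝ)) ω ∂P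
      ≤ (P A).toReal / (2 * (k:ℝ)) := by
    rw [integral_congr_ae hae]
    have := mart hX (n - j) j s (by omega)
    rw [show j + (n - j) = n by omega] at this
    rw [hsj] at this
    have hc : ((2 * k : ℤ) : ℝ) = 2 * (k:ℝ) := by push_cast; ring
    rwa [hc] at this
  -- combine
  have hkpos : (0:ℝ) < (k:ℝ) := by exact_mod_cast hk
  have hfinal : (P (A ∩ {ω | X n ω < k})).toReal ≤ 2⁻¹ * (P A).toReal := by
    rw [hPB]
    calc (P (A ∩ {ω | X n ω < k} ∩ G)).toReal
        ≤ ((k:ℝ) - 1) * ((P A).toReal / (2 * (k:ℝ))) := by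
          refine le_trans hstep1 ?_
          refine mul_le_mul_of_nonneg_left hstep2 ?_
          have : (1:ℝ) ≤ (k:ℝ) := by exact_mod_cast hk
          linarith
      _ ≤ 2⁻¹ * (P A).toReal := by
          rw [div_eq_mul_inv]
          have hPa : (0:ℝ) ≤ (P A).toReal := ENNReal.toReal_nonneg
          have h1 : ((k:ℝ) - 1) * ((P A).toReal * (2 * (k:ℝ))⁻¹)
              = (((k:ℝ) - 1) / (2 * (k:ℝ))) * (P A).toReal := by ring
          rw [h1]
          refine mul_le_mul_of_nonneg_right ?_ hPa
          rw [div_le_iff₀ (by positivity)]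
          linarith
  have h2 : P (A ∩ {ω | X n ω < k}) ≠ ⊤ := measure_ne_top P _
  have h3 : (2⁻¹ : ENNReal) * P A ≠ ⊤ :=
    ENNReal.mul_ne_top (by norm_num) (measure_ne_top P _)
  rw [← ENNReal.toReal_le_toReal h2 h3] at *
  · convert hfinal using 2
    rw [ENNReal.toReal_mul]
    norm_num
  
end
section
variable {Ω : Type*} [MeasurableSpace Ω]
variable {P : Measure Ω} [IsProbabilityMeasure P] {X : ℕ → Ω → ℤ}

lemma hit_bound (hX : IsHProcess P X 0) {n : ℕ} (hn : 1 ≤ n) {k : ℤ} (hk : 1 ≤ k) :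
    (P {ω | ∃ j, 1 ≤ j ∧ j ≤ n ∧ 2*k ≤ X j ω}).toReal
      ≤ 2 * (P {ω | k ≤ X n ω}).toReal := by
  classical
  have hmc := measurableSet_cyl hX.meas
  set Zs : Set Ω := {ω | ∃ j, 1 ≤ j ∧ j ≤ n ∧ 2*k ≤ X j ω} with hZs
  have hZsm : MeasurableSet Zs := by
    have : Zs = ⋃ j, ⋃ (_ : 1 ≤ j ∧ j ≤ n), X j ⁻¹' {z | 2*k ≤ z} := by
      ext ω
      simp only [hZs, Set.mem_setOf_eq, Set.mem_iUnion, Set.mem_preimage]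
      tauto
    rw [this]
    exact MeasurableSet.iUnion fun j => MeasurableSet.iUnion fun _ =>
      (hX.meas j) (by trivial)
  -- the pieces
  set cond : (Σ j : ℕ, (Fin (j+1) → ℤ)) → Prop :=
    fun p => 1 ≤ p.1 ∧ p.1 ≤ n ∧ extFin p.2 p.1 = 2*k ∧ ∀ i, i < p.1 → extFin p.2 i < 2*k
    with hcond
  set D : (Σ j : ℕ, (Fin (j+1) → ℤ)) → Set Ω :=
    fun p => if cond p then cylSet X p.1 (extFin p.2) else ∅ with hD
  have hDm : ∀ p, MeasurableSet (D p) := by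
    intro p
    simp only [hD]
    split_ifs
    · exact hmc _ _
    · exact MeasurableSet.empty
  have hDdisj : Pairwise (Function.onFun Disjoint D) := by
    rintro ⟨j, v⟩ ⟨j', v'⟩ hpq
    simp only [Function.onFun, hD]
    split_ifs with hp hq hq
    · rw [Set.disjoint_left]
      intro ω hωp hωq
      rcases lt_trichotomy j j' with hlt | heq | hgt
      · have h1 : X j ω = extFin v j := hωp j le_rfl
        have h2 : X j ω = extFin v' j := hωq j (by omega)
        have h3 := hq.2.2.2 j hlt
        have h4 := hp.2.2.1
        simp only at h1 h2 h3 h4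
        omega
      · subst heq
        have hv : v ≠ v' := by
          intro hv2
          exact hpq (by rw [hv2])
        have : ∃ i : Fin (j+1), v i ≠ v' i := by
          by_contra hc
          push_neg at hc
          exact hv (funext hc)
        obtain ⟨i, hi⟩ := this
        have h1 : X (i:ℕ) ω = extFin v (i:ℕ) := hωp (i:ℕ) (by omega)
        have h2 : X (i:ℕ) ω = extFin v' (i:ℕ) := hωq (i:ℕ) (by omega)
        have e1 : extFin v (i:ℕ) = v i := by
          simp only [extFin, dif_pos i.isLt, Fin.eta]
        have e2 : extFin v' (i:ℕ) = v' i := by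
          simp only [extFin, dif_pos i.isLt, Fin.eta]
        rw [e1] at h1
        rw [e2] at h2
        exact hi (by rw [← h1, ← h2])
      · have h1 : X j' ω = extFin v' j' := hωq j' le_rfl
        have h2 : X j' ω = extFin v j' := hωp j' (by omega)
        have h3 := hp.2.2.2 j' hgt
        have h4 := hq.2.2.1
        simp only at h1 h2 h3 h4
        omega
    · exact Set.disjoint_empty _
    · exact Set.empty_disjoint _
    · exact Set.disjoint_empty _
  have hG : ∀ᵐ ω ∂P, ω ∈ goodSet X n := ae_mem_goodSet hX n
  have hcover : Zs ∩ goodSet X n ⊆ ⋃ p, D p := by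
    rintro ω ⟨hωZ, hg⟩
    have hex : ∃ j, 1 ≤ j ∧ j ≤ n ∧ 2*k ≤ X j ω := hωZ
    obtain ⟨hj₀1, hj₀n, hj₀X⟩ := Nat.find_spec hex
    set j₀ := Nat.find hex with hj₀
    have hmin : ∀ i, i < j₀ → X i ω < 2*k := by
      intro i hi
      rcases Nat.eq_zero_or_pos i with h0 | h1
      · subst h0; rw [hg.1]; omega
      · have hni := Nat.find_min hex (show i < Nat.find hex by rw [← hj₀]; exact hi)
        push_neg at hni
        have := hni h1 (by omega)
        omega
    have hXj₀ : X j₀ ω = 2*k := by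
      have hle : X ((j₀ - 1) + 1) ω ≤ X (j₀ - 1) ω + 1 :=
        goodSet_step_le hg (by omega)
      rw [show (j₀ - 1) + 1 = j₀ by omega] at hle
      have := hmin (j₀ - 1) (by omega)
      omega
    refine Set.mem_iUnion.mpr ⟨⟨j₀, fun i => X (i:ℕ) ω⟩, ?_⟩
    have hcondp : cond ⟨j₀, fun i => X (i:ℕ) ω⟩ := by
      refine ⟨hj₀1, hj₀n, ?_, ?_⟩
      · simp only [extFin, dif_pos (Nat.lt_succ_self j₀)]
        exact hXj₀
      · intro i hi
        have hi' : i < j₀ := hi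
        simp only [extFin]
        rw [dif_pos (by omega : i < j₀ + 1)]
        exact hmin i hi'
    simp only [hD]
    rw [if_pos hcondp]
    intro i hi
    simp only [extFin, dif_pos (by omega : i < j₀+1)]
  have hDZ : ∀ p, D p ⊆ Zs := by
    intro p
    simp only [hD]
    split_ifs with hp
    · intro ω hω
      exact ⟨p.1, hp.1, hp.2.1, by rw [hω p.1 le_rfl, hp.2.2.1]⟩
    · exact Set.empty_subset _
  have hDmark : ∀ p, P (D p ∩ {ω | X n ω < k}) ≤ 2⁻¹ * P (D p) := by
    intro p
    simp only [hD]
    split_ifs with hp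
    · exact markov_cyl hX hp.1 hp.2.1 hk _ hp.2.2.1
    · simp
  have hXnm : MeasurableSet {ω | X n ω < k} := by
    have he : {ω | X n ω < k} = X n ⁻¹' {z | z < k} := rfl
    rw [he]
    exact (hX.meas n) (by trivial)
  have h1 : P (Zs ∩ {ω | X n ω < k}) = P (Zs ∩ {ω | X n ω < k} ∩ goodSet X n) :=
    (measure_inter_conull (by simpa using ae_goodSet hX n)).symm
  have h2 : P (Zs ∩ {ω | X n ω < k} ∩ goodSet X n)
      ≤ ∑' p, P (D p ∩ {ω | X n ω < k}) := by
    refine le_trans (measure_mono ?_) (measure_iUnion_le _)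
    rintro ω ⟨⟨hωZ, hωk⟩, hg⟩
    obtain ⟨p, hp⟩ := Set.mem_iUnion.mp (hcover ⟨hωZ, hg⟩)
    exact Set.mem_iUnion.mpr ⟨p, hp, hωk⟩
  have h3 : ∑' p, P (D p ∩ {ω | X n ω < k}) ≤ 2⁻¹ * P Zs := by
    calc ∑' p, P (D p ∩ {ω | X n ω < k}) ≤ ∑' p, 2⁻¹ * P (D p) :=
          ENNReal.tsum_le_tsum hDmark
      _ = 2⁻¹ * ∑' p, P (D p) := ENNReal.tsum_mul_left
      _ = 2⁻¹ * P (⋃ p, D p) := by rw [measure_iUnion hDdisj hDm]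
      _ ≤ 2⁻¹ * P Zs := mul_le_mul_right (measure_mono (Set.iUnion_subset hDZ)) _
  have hmain : P (Zs ∩ {ω | X n ω < k}) ≤ 2⁻¹ * P Zs := by
    rw [h1]; exact le_trans h2 h3
  have h4 : P Zs = P (Zs ∩ {ω | X n ω < k}) + P (Zs \ {ω | X n ω < k}) :=
    (measure_inter_add_diff Zs hXnm).symm
  have h5 : P (Zs \ {ω | X n ω < k}) ≤ P {ω | k ≤ X n ω} := by
    refine measure_mono ?_
    rintro ω ⟨-, hω⟩
    simp only [Set.mem_setOf_eq, not_lt] at hω ⊢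
    exact hω
  have hza : (P (Zs ∩ {ω | X n ω < k})).toReal ≤ 2⁻¹ * (P Zs).toReal := by
    have := ENNReal.toReal_mono (ENNReal.mul_ne_top (by norm_num) (measure_ne_top P _)) hmain
    rwa [ENNReal.toReal_mul, show ((2:ENNReal)⁻¹).toReal = 2⁻¹ by norm_num] at this
  have hzb : (P Zs).toReal
      = (P (Zs ∩ {ω | X n ω < k})).toReal + (P (Zs \ {ω | X n ω < k})).toReal := by
    rw [h4, ENNReal.toReal_add (measure_ne_top P _) (measure_ne_top P _)]
  have hzc : (P (Zs \ {ω | X n ω < k})).toReal ≤ (P {ω | k ≤ X n ω}).toReal :=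
    ENNReal.toReal_mono (measure_ne_top P _) h5
  linarith
end
section
variable {Ω : Type*} [MeasurableSpace Ω]
variable {P : Measure Ω} [IsProbabilityMeasure P] {X : ℕ → Ω → ℤ}

lemma sum_ite_le (z : ℤ) (n : ℕ) (h1 : 1 ≤ z) (h2 : z ≤ n) :
    (∑ m ∈ Finset.Icc 1 n, if (m:ℤ) ≤ z then (1:ℝ) else 0) = (z:ℝ) := by
  rw [Finset.sum_boole]
  have hf : (Finset.Icc 1 n).filter (fun m : ℕ => (m:ℤ) ≤ z) = Finset.Icc 1 z.toNat := by
    ext m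
    simp only [Finset.mem_filter, Finset.mem_Icc]
    constructor
    · rintro ⟨⟨a, b⟩, c⟩; omega
    · rintro ⟨a, b⟩; omega
  rw [hf, Nat.card_Icc]
  have : z.toNat + 1 - 1 = z.toNat := by omega
  rw [this]
  have := Int.toNat_of_nonneg (by omega : (0:ℤ) ≤ z)
  exact_mod_cast congrArg (fun x : ℤ => (x : ℝ)) this

lemma layer_cake {Y : Ω → ℤ} (hmeas : ∀ m : ℕ, MeasurableSet {ω | (m:ℤ) ≤ Y ω}) (n : ℕ)
    (hb : ∀ᵐ ω ∂P, 1 ≤ Y ω ∧ Y ω ≤ n) :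
    ∫ ω, (Y ω : ℝ) ∂P = ∑ m ∈ Finset.Icc 1 n, (P {ω | (m:ℤ) ≤ Y ω}).toReal := by
  have hae : (fun ω => (Y ω : ℝ)) =ᵐ[P]
      (fun ω => ∑ m ∈ Finset.Icc 1 n, ({ω | (m:ℤ) ≤ Y ω}).indicator (fun _ => (1:ℝ)) ω) := by
    filter_upwards [hb] with ω hω
    simp only [Set.indicator_apply, Set.mem_setOf_eq]
    exact (sum_ite_le (Y ω) n hω.1 hω.2).symm
  rw [integral_congr_ae hae, integral_finset_sum _
    (fun m _ => (integrable_const (1:ℝ)).indicator (hmeas m))]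
  refine Finset.sum_congr rfl fun m _ => ?_
  rw [integral_indicator_const _ (hmeas m), smul_eq_mul, mul_one]
  rfl

lemma sum_div2_le (g : ℕ → ℝ) (hg : ∀ k, 0 ≤ g k) (n : ℕ) :
    ∑ m ∈ Finset.Icc 2 n, g (m/2) ≤ 2 * ∑ k ∈ Finset.Icc 1 n, g k := by
  rw [Finset.sum_comp g (fun m => m/2)]
  have h1 : ∀ b ∈ (Finset.Icc 2 n).image (fun m => m/2),
      ((Finset.Icc 2 n).filter (fun m => m/2 = b)).card • g b ≤ 2 * g b := by
    intro b _
    have hsub : (Finset.Icc 2 n).filter (fun m => m/2 = b) ⊆ {2*b, 2*b+1} := by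
      intro m hm
      simp only [Finset.mem_filter, Finset.mem_Icc] at hm
      simp only [Finset.mem_insert, Finset.mem_singleton]
      omega
    have hcard : ((Finset.Icc 2 n).filter (fun m => m/2 = b)).card ≤ 2 := by
      refine le_trans (Finset.card_le_card hsub) ?_
      refine le_trans (Finset.card_insert_le _ _) ?_
      simp
    rw [nsmul_eq_mul]
    exact mul_le_mul_of_nonneg_right (by exact_mod_cast hcard) (hg b)
  refine le_trans (Finset.sum_le_sum h1) ?_
  rw [← Finset.mul_sum]
  refine mul_le_mul_of_nonneg_left ?_ (by norm_num)
  refine Finset.sum_le_sum_of_subset_of_nonneg ?_ (fun k _ _ => hg k)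
  intro b hb
  simp only [Finset.mem_image, Finset.mem_Icc] at hb ⊢
  obtain ⟨m, ⟨hm2, hmn⟩, hmb⟩ := hb
  omega

end

/-- For the walk conditioned to stay positive started at `0`, with
`Z_n = max{X_1, …, X_n}`: `E[Z_n] ≤ 1 + 4 E[X_n]`. -/
theorem h_process_max_expectation
    {Ω : Type*} [MeasurableSpace Ω] (P : Measure Ω) [IsProbabilityMeasure P]
    (X : ℕ → Ω → ℤ) (hX : IsHProcess P X 0) (n : ℕ) (hn : 1 ≤ n) :
    ∫ ω, (((Finset.Icc 1 n).sup' (Finset.nonempty_Icc.mpr hn)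
        (fun j => X j ω) : ℤ) : ℝ) ∂P
      ≤ 1 + 4 * ∫ ω, (X n ω : ℝ) ∂P := by
  classical
  set Z : Ω → ℤ := fun ω => (Finset.Icc 1 n).sup' (Finset.nonempty_Icc.mpr hn)
    (fun j => X j ω) with hZ
  show (∫ ω, (Z ω : ℝ) ∂P) ≤ 1 + 4 * ∫ ω, (X n ω : ℝ) ∂P
  have hG : ∀ᵐ ω ∂P, ω ∈ goodSet X n := ae_mem_goodSet hX n
  have hZset : ∀ m : ℤ, {ω | m ≤ Z ω} = {ω | ∃ j, 1 ≤ j ∧ j ≤ n ∧ m ≤ X j ω} := by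
    intro m; ext ω
    simp only [Set.mem_setOf_eq, hZ]
    rw [Finset.le_sup'_iff]
    constructor
    · rintro ⟨j, hj, hle⟩; rw [Finset.mem_Icc] at hj; exact ⟨j, hj.1, hj.2, hle⟩
    · rintro ⟨j, h1, h2, hle⟩; exact ⟨j, Finset.mem_Icc.mpr ⟨h1, h2⟩, hle⟩
  have hZmeas : ∀ m : ℕ, MeasurableSet {ω | (m:ℤ) ≤ Z ω} := by
    intro m
    rw [hZset]
    have he : {ω | ∃ j, 1 ≤ j ∧ j ≤ n ∧ (m:ℤ) ≤ X j ω}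
        = ⋃ j, ⋃ (_ : 1 ≤ j ∧ j ≤ n), X j ⁻¹' {z | (m:ℤ) ≤ z} := by
      ext ω; simp only [Set.mem_setOf_eq, Set.mem_iUnion, Set.mem_preimage]; tauto
    rw [he]
    exact .iUnion fun j => .iUnion fun _ => (hX.meas j) (by trivial)
  have hXmeas : ∀ m : ℕ, MeasurableSet {ω | (m:ℤ) ≤ X n ω} := by
    intro m
    have he : {ω | (m:ℤ) ≤ X n ω} = X n ⁻¹' {z | (m:ℤ) ≤ z} := rfl
    rw [he]; exact (hX.meas n) (by trivial)
  have hbZ : ∀ᵐ ω ∂P, 1 ≤ Z ω ∧ Z ω ≤ n := by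
    filter_upwards [hG] with ω hg
    constructor
    · calc (1:ℤ) ≤ X 1 ω := (goodSet_bounds hg 1 hn).2.2 le_rfl
        _ ≤ Z ω := by
          show X 1 ω ≤ (Finset.Icc 1 n).sup' (Finset.nonempty_Icc.mpr hn) (fun j => X j ω)
          exact Finset.le_sup' (fun j => X j ω) (Finset.mem_Icc.mpr ⟨le_rfl, hn⟩)
    · show (Finset.Icc 1 n).sup' (Finset.nonempty_Icc.mpr hn) (fun j => X j ω) ≤ (n:ℤ)
      refine Finset.sup'_le _ _ fun j hj => ?_
      rw [Finset.mem_Icc] at hj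
      have := (goodSet_bounds hg j hj.2).2.1
      have : (j:ℤ) ≤ (n:ℤ) := by exact_mod_cast hj.2
      omega
  have hbX : ∀ᵐ ω ∂P, 1 ≤ X n ω ∧ X n ω ≤ n := by
    filter_upwards [hG] with ω hg
    exact ⟨(goodSet_bounds hg n le_rfl).2.2 hn, (goodSet_bounds hg n le_rfl).2.1⟩
  have hEZ := layer_cake (P := P) hZmeas n hbZ
  have hEX := layer_cake (P := P) hXmeas n hbX
  rw [hEZ, hEX]
  set pZ : ℕ → ℝ := fun m => (P {ω | (m:ℤ) ≤ Z ω}).toReal with hpZ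
  set pX : ℕ → ℝ := fun m => (P {ω | (m:ℤ) ≤ X n ω}).toReal with hpX
  have hpZ1 : pZ 1 ≤ 1 := by
    simp only [hpZ]
    have h := prob_le_one (μ := P) (s := {ω | ((1:ℕ):ℤ) ≤ Z ω})
    have := ENNReal.toReal_mono (by norm_num) h
    simpa using this
  have hf2 : ∀ m ∈ Finset.Icc 2 n, pZ m ≤ 2 * pX (m/2) := by
    intro m hm
    rw [Finset.mem_Icc] at hm
    have hk1 : 1 ≤ m/2 := by omega
    have hsub : {ω | (m:ℤ) ≤ Z ω}
        ⊆ {ω | ∃ j, 1 ≤ j ∧ j ≤ n ∧ 2*((m/2 : ℕ):ℤ) ≤ X j ω} := by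
      rw [hZset]
      rintro ω ⟨j, h1, h2, h3⟩
      refine ⟨j, h1, h2, ?_⟩
      have : 2*((m/2:ℕ):ℤ) ≤ (m:ℤ) := by
        have : 2*(m/2) ≤ m := by omega
        exact_mod_cast this
      omega
    have hb := hit_bound hX hn (show (1:ℤ) ≤ ((m/2:ℕ):ℤ) by exact_mod_cast hk1)
    simp only [hpZ, hpX]
    exact le_trans (ENNReal.toReal_mono (measure_ne_top P _) (measure_mono hsub)) hb
  calc ∑ m ∈ Finset.Icc 1 n, pZ m
      = pZ 1 + ∑ m ∈ Finset.Icc 2 n, pZ m := by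
        rw [show Finset.Icc 1 n = insert 1 (Finset.Icc 2 n) from by
          ext a; simp only [Finset.mem_Icc, Finset.mem_insert]; omega,
          Finset.sum_insert (by simp)]
    _ ≤ 1 + ∑ m ∈ Finset.Icc 2 n, 2 * pX (m/2) :=
        add_le_add hpZ1 (Finset.sum_le_sum hf2)
    _ = 1 + 2 * ∑ m ∈ Finset.Icc 2 n, pX (m/2) := by rw [Finset.mul_sum]
    _ ≤ 1 + 2 * (2 * ∑ k ∈ Finset.Icc 1 n, pX k) := by
        have := sum_div2_le pX (fun k => ENNReal.toReal_nonneg) n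
        linarith
    _ = 1 + 4 * ∑ k ∈ Finset.Icc 1 n, pX k := by ring
end

section
/- Let X be the simple symmetric random walk conditioned to stay positive, started at 0, and Z_n = max{X_1,...,X_n}. There exists a constant C such that E[Z_n] ≤ C √n for all n ≥ 1. -/
open MeasureTheory ProbabilityTheory Finset

noncomputable section HAux

/-- extensions of a path `s` of length `n` by one step -/
def hExt (n : ℕ) (s : ℕ → ℤ) : Finset (ℕ → ℤ) :=
  letI := Classical.decEq (ℕ → ℤ)
  if s n = 0 then {Function.update s (n+1) 1}
  else {Function.update s (n+1) (s n + 1), Function.update s (n+1) (s n - 1)}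

/-- admissible paths of length `n` for the h-process started at 0 -/
def hAdm : ℕ → Finset (ℕ → ℤ)
  | 0 => {fun _ => (0:ℤ)}
  | n+1 =>
    letI := Classical.decEq (ℕ → ℤ)
    (hAdm n).biUnion (hExt n)

lemma hExt_def (n : ℕ) (s : ℕ → ℤ) :
    hExt n s = (letI := Classical.decEq (ℕ → ℤ)
      if s n = 0 then {Function.update s (n+1) 1}
      else {Function.update s (n+1) (s n + 1), Function.update s (n+1) (s n - 1)}) := rfl

lemma hAdm_zero : hAdm 0 = {fun _ => (0:ℤ)} := rfl

lemma hAdm_succ (n : ℕ) : hAdm (n+1) =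
    (letI := Classical.decEq (ℕ → ℤ); (hAdm n).biUnion (hExt n)) := rfl

lemma hExt_update (n : ℕ) (s : ℕ → ℤ) (t : ℕ → ℤ) (ht : t ∈ hExt n s) :
    (∀ i, i ≤ n → t i = s i) ∧ t = Function.update s (n+1) (t (n+1)) := by
  classical
  unfold hExt at ht
  split_ifs at ht with h
  · simp only [Finset.mem_singleton] at ht
    subst ht
    refine ⟨fun i hi => Function.update_of_ne (by omega) _ _, ?_⟩
    rw [Function.update_self]
  · simp only [Finset.mem_insert, Finset.mem_singleton] at ht
    rcases ht with ht | ht <;> subst ht <;>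
      exact ⟨fun i hi => Function.update_of_ne (by omega) _ _, by rw [Function.update_self]⟩

lemma hAdm_spec : ∀ n, ∀ s ∈ hAdm n,
    s 0 = 0 ∧ (∀ i, n < i → s i = 0) ∧ (∀ i, i ≤ n → 0 ≤ s i) ∧ (1 ≤ n → s 1 = 1) := by
  intro n
  induction n with
  | zero =>
    intro s hs
    simp only [hAdm, Finset.mem_singleton] at hs
    subst hs
    exact ⟨rfl, fun i _ => rfl, fun i _ => le_refl 0, by omega⟩
  | succ n ih =>
    intro t ht
    classical
    simp only [hAdm, Finset.mem_biUnion] at ht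
    obtain ⟨s, hs, hts⟩ := ht
    obtain ⟨hagree, hupd⟩ := hExt_update n s t hts
    obtain ⟨h0, houts, hnn, h1⟩ := ih s hs
    have houtt : ∀ i, n+1 < i → t i = 0 := by
      intro i hi
      rw [hupd, Function.update_of_ne (by omega)]
      exact houts i (by omega)
    have hval : t (n+1) = s n + 1 ∨ t (n+1) = s n - 1 := by
      unfold hExt at hts
      split_ifs at hts with h
      · simp only [Finset.mem_singleton] at hts; subst hts
        rw [Function.update_self]; left; omega
      · simp only [Finset.mem_insert, Finset.mem_singleton] at hts
        rcases hts with hts | hts <;> subst hts <;> rw [Function.update_self]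
        · left; rfl
        · right; rfl
    have hpos : 0 ≤ t (n+1) := by
      unfold hExt at hts
      split_ifs at hts with h
      · simp only [Finset.mem_singleton] at hts; subst hts
        rw [Function.update_self]; omega
      · have hn : 0 ≤ s n := hnn n le_rfl
        have h1n : 1 ≤ s n := by omega
        simp only [Finset.mem_insert, Finset.mem_singleton] at hts
        rcases hts with hts | hts <;> subst hts <;> rw [Function.update_self] <;> omega
    refine ⟨by rw [hagree 0 (by omega)]; exact h0, houtt, ?_, ?_⟩
    · intro i hi
      rcases Nat.lt_succ_iff_lt_or_eq.mp (Nat.lt_succ_of_le hi) with h | h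
      · rw [hagree i (by omega)]; exact hnn i (by omega)
      · subst h; exact hpos
    · intro _
      rcases Nat.eq_or_lt_of_le (Nat.one_le_iff_ne_zero.mpr (Nat.succ_ne_zero n)) with h | h
      · -- n + 1 = 1, i.e. n = 0
        have hn0 : n = 0 := by omega
        subst hn0
        rcases hval with hv | hv <;> simp only [zero_add] at hv hpos <;> omega
      · rw [hagree 1 (by omega)]; exact h1 (by omega)

lemma hAdm_eq_of_agree {n : ℕ} {s t : ℕ → ℤ} (hs : s ∈ hAdm n) (ht : t ∈ hAdm n)
    (h : ∀ i, i ≤ n → s i = t i) : s = t := by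
  funext i
  rcases le_or_gt i n with hi | hi
  · exact h i hi
  · rw [(hAdm_spec n s hs).2.1 i hi, (hAdm_spec n t ht).2.1 i hi]

end HAux

noncomputable section HMeas

variable {Ω : Type*} [MeasurableSpace Ω]

def hCyl (X : ℕ → Ω → ℤ) (n : ℕ) (s : ℕ → ℤ) : Set Ω := {ω | ∀ i, i ≤ n → X i ω = s i}

lemma hCyl_meas (X : ℕ → Ω → ℤ) (hm : ∀ n, Measurable (X n)) (n : ℕ) (s : ℕ → ℤ) :
    MeasurableSet (hCyl X n s) := by
  have : hCyl X n s = ⋂ (i : ℕ), ⋂ (_ : i ≤ n), X i ⁻¹' {s i} := by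
    ext ω; simp [hCyl]
  rw [this]
  exact MeasurableSet.iInter fun i => MeasurableSet.iInter fun _ =>
    hm i (measurableSet_singleton _)

lemma hCyl_succ_update (X : ℕ → Ω → ℤ) (n : ℕ) (s : ℕ → ℤ) (v : ℤ) :
    hCyl X (n+1) (Function.update s (n+1) v)
      = {ω | X (n+1) ω = v ∧ ∀ i, i ≤ n → X i ω = s i} := by
  ext ω
  simp only [hCyl, Set.mem_setOf_eq]
  constructor
  · intro h
    refine ⟨?_, fun i hi => ?_⟩
    · have := h (n+1) le_rfl; rwa [Function.update_self] at this
    · have := h i (by omega); rwa [Function.update_of_ne (by omega)] at this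
  · rintro ⟨h1, h2⟩ i hi
    rcases Nat.eq_or_lt_of_le hi with h | h
    · subst h; rwa [Function.update_self]
    · rw [Function.update_of_ne (by omega)]; exact h2 i (by omega)

lemma hCyl_disjoint (X : ℕ → Ω → ℤ) {n : ℕ} {s t : ℕ → ℤ}
    (hs : s ∈ hAdm n) (ht : t ∈ hAdm n) (hst : s ≠ t) :
    Disjoint (hCyl X n s) (hCyl X n t) := by
  rw [Set.disjoint_left]
  intro ω hωs hωt
  exact hst (hAdm_eq_of_agree hs ht (fun i hi => by
    rw [← hωs i hi, ← hωt i hi]))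

variable {P : Measure Ω} {X : ℕ → Ω → ℤ}

lemma hExt_mass (hX : IsHProcess P X 0) (n : ℕ) (s : ℕ → ℤ) (h0 : 0 ≤ s n) :
    ∑ t ∈ hExt n s, P (hCyl X (n+1) t) = P (hCyl X n s) := by
  classical
  rw [hExt_def]
  split_ifs with h
  · rw [Finset.sum_singleton, hCyl_succ_update]
    exact hX.step_zero n s h
  · have h1 : 1 ≤ s n := by omega
    have hne : Function.update s (n+1) (s n + 1) ≠ Function.update s (n+1) (s n - 1) := by
      intro hc
      have := congrFun hc (n+1)
      simp only [Function.update_self] at this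
      omega
    rw [Finset.sum_pair hne, hCyl_succ_update, hCyl_succ_update,
      hX.step_up n s h1, hX.step_down n s h1, ← add_mul, ← ENNReal.ofReal_add, ]
    · have hx : (s n : ℝ) ≠ 0 := by exact_mod_cast (by omega : s n ≠ 0)
      have : ((s n : ℝ) + 1) / (2 * (s n : ℝ)) + ((s n : ℝ) - 1) / (2 * (s n : ℝ)) = 1 := by
        field_simp; ring
      rw [this, ENNReal.ofReal_one, one_mul]; rfl
    · positivity
    · have hx : (1:ℝ) ≤ (s n : ℝ) := by exact_mod_cast h1
      have h2x : (0:ℝ) < 2 * (s n : ℝ) := by linarith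
      apply div_nonneg (by linarith) (le_of_lt h2x)

lemma hAdm_pairwiseDisjoint (n : ℕ) :
    (↑(hAdm n) : Set (ℕ → ℤ)).PairwiseDisjoint (hExt n) := by
  intro s hs t ht hst
  simp only [Finset.disjoint_left]
  intro u hus hut
  obtain ⟨has, hus'⟩ := hExt_update n s u hus
  obtain ⟨hat, hut'⟩ := hExt_update n t u hut
  exact hst (hAdm_eq_of_agree hs ht (fun i hi => by rw [← has i hi, ← hat i hi]))

lemma hAdm_mass (hX : IsHProcess P X 0) [IsProbabilityMeasure P] (n : ℕ) :
    ∑ s ∈ hAdm n, P (hCyl X n s) = 1 := by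
  classical
  induction n with
  | zero =>
    rw [hAdm_zero, Finset.sum_singleton]
    have hset : hCyl X 0 (fun _ => (0:ℤ)) = {ω | X 0 ω = 0} := by
      ext ω; simp [hCyl, Nat.le_zero]
    rw [hset]
    have h0 : P {ω | X 0 ω = 0}ᶜ = 0 := by
      have := hX.start
      rw [ae_iff] at this
      simpa [Set.compl_setOf] using this
    have := measure_compl (s := {ω | X 0 ω = 0}) (hX.meas 0 (measurableSet_singleton (0:ℤ))) (measure_ne_top P _)
    rw [h0, measure_univ] at this
    exact le_antisymm prob_le_one (tsub_eq_zero_iff_le.mp this.symm)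
  | succ n ih =>
    rw [hAdm_succ, Finset.sum_biUnion (hAdm_pairwiseDisjoint n)]
    rw [← ih]
    exact Finset.sum_congr rfl fun s hs =>
      hExt_mass hX n s ((hAdm_spec n s hs).2.2.1 n le_rfl)

lemma hIntegral_eq_sum (hX : IsHProcess P X 0) [IsProbabilityMeasure P] (n : ℕ)
    (f : (ℕ → ℤ) → ℝ) (F : Ω → ℝ)
    (hF : ∀ s ∈ hAdm n, ∀ ω ∈ hCyl X n s, F ω = f s) :
    ∫ ω, F ω ∂P = ∑ s ∈ hAdm n, f s * (P (hCyl X n s)).toReal := by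
  classical
  set U : Set Ω := ⋃ s ∈ hAdm n, hCyl X n s with hU
  have hmeas : ∀ s ∈ hAdm n, MeasurableSet (hCyl X n s) :=
    fun s _ => hCyl_meas X hX.meas n s
  have hUm : MeasurableSet U := (hAdm n).measurableSet_biUnion hmeas
  have hU1 : P U = 1 := by
    rw [hU, measure_biUnion_finset ?_ hmeas, hAdm_mass hX n]
    intro s hs t ht hst
    exact hCyl_disjoint X hs ht hst
  have haeU : ∀ᵐ ω ∂P, ω ∈ U := by
    rw [ae_iff]
    have := measure_compl hUm (measure_ne_top P _)
    rw [hU1, measure_univ, tsub_self] at this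
    exact this
  have hae : F =ᵐ[P] fun ω => ∑ s ∈ hAdm n, (hCyl X n s).indicator (fun _ => f s) ω := by
    filter_upwards [haeU] with ω hω
    obtain ⟨s, hs, hωs⟩ := by
      simpa only [hU, Set.mem_iUnion, exists_prop, Finset.mem_coe] using hω
    rw [Finset.sum_eq_single_of_mem s hs]
    · rw [Set.indicator_of_mem hωs]
      exact hF s hs ω hωs
    · intro t ht hts
      refine Set.indicator_of_notMem ?_ _
      intro hωt
      exact hts (hAdm_eq_of_agree ht hs fun i hi => by rw [← hωt i hi, ← hωs i hi])
  rw [integral_congr_ae hae, integral_finset_sum]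
  · refine Finset.sum_congr rfl fun s hs => ?_
    rw [integral_indicator_const _ (hmeas s hs), smul_eq_mul, mul_comm]
    rfl
  · intro s hs
    exact (integrable_indicator_iff (hmeas s hs)).mpr
      (integrableOn_const (measure_lt_top _ _).ne)

lemma hSum_succ (hX : IsHProcess P X 0) (n : ℕ) (f : (ℕ → ℤ) → ℝ) :
    ∑ t ∈ hAdm (n+1), f t * (P (hCyl X (n+1) t)).toReal
      = ∑ s ∈ hAdm n,
          (if s n = 0 then f (Function.update s (n+1) 1)
           else (((s n : ℝ) + 1) / (2 * (s n : ℝ))) * f (Function.update s (n+1) (s n + 1))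
              + (((s n : ℝ) - 1) / (2 * (s n : ℝ))) * f (Function.update s (n+1) (s n - 1)))
          * (P (hCyl X n s)).toReal := by
  classical
  rw [hAdm_succ, Finset.sum_biUnion (hAdm_pairwiseDisjoint n)]
  refine Finset.sum_congr rfl fun s hs => ?_
  have hnn : 0 ≤ s n := (hAdm_spec n s hs).2.2.1 n le_rfl
  rw [hExt_def]
  split_ifs with h
  · rw [Finset.sum_singleton, hCyl_succ_update, hX.step_zero n s h]; rfl
  · have h1 : 1 ≤ s n := by omega
    have hne : Function.update s (n+1) (s n + 1) ≠ Function.update s (n+1) (s n - 1) := by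
      intro hc
      have := congrFun hc (n+1)
      simp only [Function.update_self] at this
      omega
    have hx1 : (1:ℝ) ≤ (s n : ℝ) := by exact_mod_cast h1
    have hup : (0:ℝ) ≤ ((s n : ℝ) + 1) / (2 * (s n : ℝ)) := by positivity
    have hdn : (0:ℝ) ≤ ((s n : ℝ) - 1) / (2 * (s n : ℝ)) := by
      apply div_nonneg <;> linarith
    rw [Finset.sum_pair hne, hCyl_succ_update, hCyl_succ_update,
      hX.step_up n s h1, hX.step_down n s h1,
      ENNReal.toReal_mul, ENNReal.toReal_mul,
      ENNReal.toReal_ofReal hup, ENNReal.toReal_ofReal hdn]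
    show _ = _ * (P (hCyl X n s)).toReal
    simp only [hCyl]
    ring


lemma hAdm_mass_toReal (hX : IsHProcess P X 0) [IsProbabilityMeasure P] (n : ℕ) :
    ∑ s ∈ hAdm n, (P (hCyl X n s)).toReal = 1 := by
  rw [← ENNReal.toReal_sum (fun s _ => measure_ne_top P _), hAdm_mass hX n, ENNReal.toReal_one]

lemma hM2 (hX : IsHProcess P X 0) [IsProbabilityMeasure P] :
    ∀ n, ∑ s ∈ hAdm n, ((s n : ℝ))^2 * (P (hCyl X n s)).toReal ≤ 3 * n := by
  intro n
  induction n with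
  | zero =>
    rw [hAdm_zero, Finset.sum_singleton]
    norm_num
  | succ n ih =>
    have hstep := hSum_succ (P := P) hX n (fun t => ((t (n+1) : ℝ))^2)
    rw [hstep]
    have hb : ∀ s ∈ hAdm n,
        (if s n = 0 then (((Function.update s (n+1) 1) (n+1) : ℝ))^2
         else (((s n : ℝ) + 1) / (2 * (s n : ℝ)))
                * (((Function.update s (n+1) (s n + 1)) (n+1) : ℝ))^2
            + (((s n : ℝ) - 1) / (2 * (s n : ℝ)))
                * (((Function.update s (n+1) (s n - 1)) (n+1) : ℝ))^2)
          ≤ (s n : ℝ)^2 + 3 := by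
      intro s hs
      split_ifs with h
      · rw [Function.update_self]
        have := sq_nonneg ((s n : ℝ))
        norm_num
        linarith
      · have h1 : 1 ≤ s n := by
          have := (hAdm_spec n s hs).2.2.1 n le_rfl
          omega
        have hx1 : (1:ℝ) ≤ (s n : ℝ) := by exact_mod_cast h1
        have hx0 : (s n : ℝ) ≠ 0 := by linarith
        rw [Function.update_self, Function.update_self]
        push_cast
        apply le_of_eq
        field_simp
        ring
    calc ∑ s ∈ hAdm n,
          (if s n = 0 then (((Function.update s (n+1) 1) (n+1) : ℝ))^2
           else (((s n : ℝ) + 1) / (2 * (s n : ℝ)))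
                  * (((Function.update s (n+1) (s n + 1)) (n+1) : ℝ))^2
              + (((s n : ℝ) - 1) / (2 * (s n : ℝ)))
                  * (((Function.update s (n+1) (s n - 1)) (n+1) : ℝ))^2)
            * (P (hCyl X n s)).toReal
        ≤ ∑ s ∈ hAdm n, ((s n : ℝ)^2 + 3) * (P (hCyl X n s)).toReal := by
          refine Finset.sum_le_sum fun s hs => ?_
          exact mul_le_mul_of_nonneg_right (hb s hs) ENNReal.toReal_nonneg
      _ = (∑ s ∈ hAdm n, ((s n : ℝ))^2 * (P (hCyl X n s)).toReal)
            + 3 * ∑ s ∈ hAdm n, (P (hCyl X n s)).toReal := by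
          rw [Finset.mul_sum, ← Finset.sum_add_distrib]
          exact Finset.sum_congr rfl fun s _ => by ring
      _ ≤ 3 * n + 3 * 1 := by
          rw [hAdm_mass_toReal hX n]
          exact add_le_add ih le_rfl
      _ = 3 * (n + 1 : ℕ) := by push_cast; ring

/-- running maximum of a path over `[1, n]` -/
def hMax (n : ℕ) (s : ℕ → ℤ) : ℤ :=
  if h : 1 ≤ n then (Finset.Icc 1 n).sup' (Finset.nonempty_Icc.mpr h) s else 0

lemma hMax_pos (n : ℕ) (hn : 1 ≤ n) (s : ℕ → ℤ) :
    hMax n s = (Finset.Icc 1 n).sup' (Finset.nonempty_Icc.mpr hn) s := dif_pos hn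

lemma hMax_succ (n : ℕ) (hn : 1 ≤ n) (t : ℕ → ℤ) :
    hMax (n+1) t = max (hMax n t) (t (n+1)) := by
  have hins : Finset.Icc 1 (n+1) = insert (n+1) (Finset.Icc 1 n) := by
    ext j; simp only [Finset.mem_Icc, Finset.mem_insert]; omega
  rw [hMax_pos (n+1) (by omega), hMax_pos n hn,
    Finset.sup'_congr (Finset.nonempty_Icc.mpr (by omega : (1:ℕ) ≤ n+1)) hins (fun x _ => rfl),
    Finset.sup'_insert (H := Finset.nonempty_Icc.mpr hn)]
  exact sup_comm _ _

lemma hMax_update (n : ℕ) (hn : 1 ≤ n) (s : ℕ → ℤ) (v : ℤ) :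
    hMax n (Function.update s (n+1) v) = hMax n s := by
  rw [hMax_pos n hn, hMax_pos n hn]
  refine Finset.sup'_congr _ rfl fun j hj => ?_
  rw [Finset.mem_Icc] at hj
  exact Function.update_of_ne (by omega) _ _

lemma le_hMax (n : ℕ) (hn : 1 ≤ n) (s : ℕ → ℤ) {j : ℕ} (h1 : 1 ≤ j) (h2 : j ≤ n) :
    s j ≤ hMax n s := by
  rw [hMax_pos n hn]
  exact Finset.le_sup' s (Finset.mem_Icc.mpr ⟨h1, h2⟩)

lemma hG (hX : IsHProcess P X 0) [IsProbabilityMeasure P] :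
    ∀ n, 1 ≤ n →
    ∑ s ∈ hAdm n, ((hMax n s : ℝ)^2 - 2*(hMax n s : ℝ)*(s n : ℝ)) * (P (hCyl X n s)).toReal
      ≤ 0 := by
  intro n
  induction n with
  | zero => omega
  | succ n ih =>
    intro _
    rcases Nat.eq_zero_or_pos n with hn0 | hn1
    · subst hn0
      refine Finset.sum_nonpos fun s hs => ?_
      have h1 : s 1 = 1 := (hAdm_spec 1 s hs).2.2.2 le_rfl
      have hm : hMax 1 s = 1 := by
        have hub : hMax 1 s ≤ 1 := by
          rw [hMax_pos 1 le_rfl]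
          refine Finset.sup'_le _ _ fun j hj => ?_
          rw [Finset.mem_Icc] at hj
          have hj1 : j = 1 := by omega
          subst hj1; omega
        have hlb := le_hMax 1 le_rfl s (le_refl 1) le_rfl
        omega
      rw [hm, h1]
      have hval : ((1:ℤ):ℝ)^2 - 2*((1:ℤ):ℝ)*((1:ℤ):ℝ) = -1 := by norm_num
      rw [hval]
      have := ENNReal.toReal_nonneg (a := P (hCyl X 1 s))
      linarith
    · have hstep := hSum_succ (P := P) hX n
        (fun t => (hMax (n+1) t : ℝ)^2 - 2*(hMax (n+1) t : ℝ)*(t (n+1) : ℝ))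
      rw [hstep]
      refine le_trans (Finset.sum_le_sum (fun s hs => ?_)) (ih hn1)
      have hx0 : 0 ≤ s n := (hAdm_spec n s hs).2.2.1 n le_rfl
      have hxz : s n ≤ hMax n s := le_hMax n hn1 s hn1 le_rfl
      have hz1 : 1 ≤ hMax n s := by
        have h1 : s 1 = 1 := (hAdm_spec n s hs).2.2.2 hn1
        have := le_hMax n hn1 s (le_refl 1) hn1
        omega
      refine mul_le_mul_of_nonneg_right ?_ ENNReal.toReal_nonneg
      split_ifs with h
      · rw [hMax_succ n hn1, hMax_update n hn1, Function.update_self,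
          max_eq_left hz1, h]
        have hzr : (1:ℝ) ≤ ((hMax n s : ℤ):ℝ) := by exact_mod_cast hz1
        push_cast
        nlinarith
      · have h1 : 1 ≤ s n := by omega
        rw [hMax_succ n hn1, hMax_update n hn1, Function.update_self,
            hMax_succ n hn1, hMax_update n hn1, Function.update_self,
            max_eq_left (show s n - 1 ≤ hMax n s by omega)]
        have hx1 : (1:ℝ) ≤ ((s n : ℤ):ℝ) := by exact_mod_cast h1
        have h2x : (0:ℝ) < 2*((s n : ℤ):ℝ) := by linarith
        rcases eq_or_lt_of_le hxz with he | hlt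
        · rw [max_eq_right (show hMax n s ≤ s n + 1 by omega), ← he]
          push_cast
          rw [div_mul_eq_mul_div, div_mul_eq_mul_div, ← add_div,
            div_le_iff₀ h2x]
          nlinarith
        · rw [max_eq_left (show s n + 1 ≤ hMax n s by omega)]
          have hzr : ((s n : ℤ):ℝ) + 1 ≤ ((hMax n s : ℤ):ℝ) := by exact_mod_cast (by omega : s n + 1 ≤ hMax n s)
          push_cast
          push_cast at hzr
          rw [div_mul_eq_mul_div, div_mul_eq_mul_div, ← add_div,
            div_le_iff₀ h2x]
          nlinarith

end HMeas

/-- For the walk conditioned to stay positive started at `0`, with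
`Z_n = max{X_1, …, X_n}`: there is a constant `C` with `E[Z_n] ≤ C √n` for all `n ≥ 1`. -/
theorem h_process_max_diffusive
    {Ω : Type*} [MeasurableSpace Ω] (P : Measure Ω) [IsProbabilityMeasure P]
    (X : ℕ → Ω → ℤ) (hX : IsHProcess P X 0) :
    ∃ C : ℝ, ∀ n : ℕ, ∀ hn : 1 ≤ n,
      ∫ ω, (((Finset.Icc 1 n).sup' (Finset.nonempty_Icc.mpr hn)
          (fun j => X j ω) : ℤ) : ℝ) ∂P
        ≤ C * Real.sqrt n := by
  refine ⟨2 * Real.sqrt 3, fun n hn => ?_⟩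
  have hw0 : ∀ s : ℕ → ℤ, (0:ℝ) ≤ (P (hCyl X n s)).toReal := fun s => ENNReal.toReal_nonneg
  have hmass : ∑ s ∈ hAdm n, (P (hCyl X n s)).toReal = 1 := hAdm_mass_toReal hX n
  have hInt : ∫ ω, (((Finset.Icc 1 n).sup' (Finset.nonempty_Icc.mpr hn)
        (fun j => X j ω) : ℤ) : ℝ) ∂P
      = ∑ s ∈ hAdm n, ((hMax n s : ℤ):ℝ) * (P (hCyl X n s)).toReal := by
    refine hIntegral_eq_sum hX n (fun s => ((hMax n s : ℤ):ℝ)) _ ?_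
    intro s hs ω hω
    congr 1
    rw [hMax_pos n hn]
    exact Finset.sup'_congr _ rfl fun j hj => hω j (Finset.mem_Icc.mp hj).2
  rw [hInt]
  set S1 := ∑ s ∈ hAdm n, ((hMax n s : ℤ):ℝ) * (P (hCyl X n s)).toReal with hS1def
  set A2 := ∑ s ∈ hAdm n, ((hMax n s : ℤ):ℝ)^2 * (P (hCyl X n s)).toReal with hA2def
  set B2 := ∑ s ∈ hAdm n, ((s n : ℤ):ℝ)^2 * (P (hCyl X n s)).toReal with hB2def
  set AB := ∑ s ∈ hAdm n, ((hMax n s : ℤ):ℝ) * ((s n : ℤ):ℝ) * (P (hCyl X n s)).toReal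
    with hABdef
  have hB2le : B2 ≤ 3 * n := hM2 hX n
  have hGn : A2 - 2 * AB ≤ 0 := by
    have := hG hX n hn
    have hexp : ∑ s ∈ hAdm n,
        ((hMax n s : ℝ)^2 - 2*(hMax n s : ℝ)*(s n : ℝ)) * (P (hCyl X n s)).toReal
        = A2 - 2 * AB := by
      rw [hA2def, hABdef, Finset.mul_sum, ← Finset.sum_sub_distrib]
      exact Finset.sum_congr rfl fun s _ => by ring
    linarith [hexp ▸ this]
  have hA2nn : 0 ≤ A2 := Finset.sum_nonneg fun s _ =>
    mul_nonneg (sq_nonneg _) (hw0 s)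
  have hB2nn : 0 ≤ B2 := Finset.sum_nonneg fun s _ =>
    mul_nonneg (sq_nonneg _) (hw0 s)
  have hznn : ∀ s ∈ hAdm n, (0:ℝ) ≤ ((hMax n s : ℤ):ℝ) := by
    intro s hs
    have h1 : s 1 = 1 := (hAdm_spec n s hs).2.2.2 hn
    have := le_hMax n hn s (le_refl 1) hn
    exact_mod_cast (by omega : (0:ℤ) ≤ hMax n s)
  have hxnn : ∀ s ∈ hAdm n, (0:ℝ) ≤ ((s n : ℤ):ℝ) := by
    intro s hs
    exact_mod_cast (hAdm_spec n s hs).2.2.1 n le_rfl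
  have hS1nn : 0 ≤ S1 := Finset.sum_nonneg fun s hs =>
    mul_nonneg (hznn s hs) (hw0 s)
  have hABnn : 0 ≤ AB := Finset.sum_nonneg fun s hs =>
    mul_nonneg (mul_nonneg (hznn s hs) (hxnn s hs)) (hw0 s)
  -- Cauchy–Schwarz: S1^2 ≤ A2
  have hcs1 : S1^2 ≤ A2 := by
    have h := Finset.sum_mul_sq_le_sq_mul_sq (hAdm n)
      (fun s => ((hMax n s : ℤ):ℝ) * Real.sqrt ((P (hCyl X n s)).toReal))
      (fun s => Real.sqrt ((P (hCyl X n s)).toReal))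
    have e1 : ∑ s ∈ hAdm n,
        (((hMax n s : ℤ):ℝ) * Real.sqrt ((P (hCyl X n s)).toReal))
          * Real.sqrt ((P (hCyl X n s)).toReal) = S1 := by
      refine Finset.sum_congr rfl fun s _ => ?_
      rw [mul_assoc, Real.mul_self_sqrt (hw0 s)]
    have e2 : ∑ s ∈ hAdm n,
        (((hMax n s : ℤ):ℝ) * Real.sqrt ((P (hCyl X n s)).toReal))^2 = A2 := by
      refine Finset.sum_congr rfl fun s _ => ?_
      rw [mul_pow, Real.sq_sqrt (hw0 s)]
    have e3 : ∑ s ∈ hAdm n, (Real.sqrt ((P (hCyl X n s)).toReal))^2 = 1 := by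
      rw [← hmass]
      exact Finset.sum_congr rfl fun s _ => Real.sq_sqrt (hw0 s)
    rw [e1, e2, e3, mul_one] at h
    exact h
  -- Cauchy–Schwarz: AB^2 ≤ A2 * B2
  have hcs2 : AB^2 ≤ A2 * B2 := by
    have h := Finset.sum_mul_sq_le_sq_mul_sq (hAdm n)
      (fun s => ((hMax n s : ℤ):ℝ) * Real.sqrt ((P (hCyl X n s)).toReal))
      (fun s => ((s n : ℤ):ℝ) * Real.sqrt ((P (hCyl X n s)).toReal))
    have e1 : ∑ s ∈ hAdm n,
        (((hMax n s : ℤ):ℝ) * Real.sqrt ((P (hCyl X n s)).toReal))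
          * (((s n : ℤ):ℝ) * Real.sqrt ((P (hCyl X n s)).toReal)) = AB := by
      refine Finset.sum_congr rfl fun s _ => ?_
      have : Real.sqrt ((P (hCyl X n s)).toReal) * Real.sqrt ((P (hCyl X n s)).toReal)
          = (P (hCyl X n s)).toReal := Real.mul_self_sqrt (hw0 s)
      linear_combination (((hMax n s : ℤ):ℝ) * ((s n : ℤ):ℝ)) * this
    have e2 : ∑ s ∈ hAdm n,
        (((hMax n s : ℤ):ℝ) * Real.sqrt ((P (hCyl X n s)).toReal))^2 = A2 := by
      refine Finset.sum_congr rfl fun s _ => ?_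
      rw [mul_pow, Real.sq_sqrt (hw0 s)]
    have e3 : ∑ s ∈ hAdm n,
        (((s n : ℤ):ℝ) * Real.sqrt ((P (hCyl X n s)).toReal))^2 = B2 := by
      refine Finset.sum_congr rfl fun s _ => ?_
      rw [mul_pow, Real.sq_sqrt (hw0 s)]
    rw [e1, e2, e3] at h
    exact h
  -- combine
  have hABle : AB ≤ Real.sqrt A2 * Real.sqrt B2 := by
    have h := Real.sqrt_le_sqrt hcs2
    rw [Real.sqrt_sq hABnn, Real.sqrt_mul hA2nn] at h
    exact h
  have hu2 : (Real.sqrt A2)^2 = A2 := Real.sq_sqrt hA2nn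
  have hunn : 0 ≤ Real.sqrt A2 := Real.sqrt_nonneg _
  have hvnn : 0 ≤ Real.sqrt B2 := Real.sqrt_nonneg _
  have hule : Real.sqrt A2 ≤ 2 * Real.sqrt B2 := by
    rcases eq_or_lt_of_le hunn with h0 | hpos
    · linarith
    · nlinarith
  have hS1le : S1 ≤ Real.sqrt A2 := by
    have h := Real.sqrt_le_sqrt hcs1
    rwa [Real.sqrt_sq hS1nn] at h
  have hvle : Real.sqrt B2 ≤ Real.sqrt 3 * Real.sqrt n := by
    have h := Real.sqrt_le_sqrt hB2le
    rwa [Real.sqrt_mul (by norm_num : (0:ℝ) ≤ 3)] at h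
  calc S1 ≤ Real.sqrt A2 := hS1le
    _ ≤ 2 * Real.sqrt B2 := hule
    _ ≤ 2 * (Real.sqrt 3 * Real.sqrt n) := by linarith
    _ = 2 * Real.sqrt 3 * Real.sqrt n := by ring
end

section
/- For independent random variables with values in [0,∞), if nonnegative random functions (S_i, L_i, R_i)_{i=1..n} defined on independent probability spaces satisfy sup_ℓ Σ_m E[e^{α S_i(m)} 1_{L_i(m)=ℓ}] ≤ M for each i, then Σ_{m_0 ≥ 0} E[ Σ_{m_1,...,m_n ≥ 0} Π_{i=1}^n e^{α S_i(m_i)} 1_{L_i(m_i) = m_{i-1} − R_{i-2}(m_{i-2})} ] ≤ r·M^n, where the number of possible values of m_0 is at most r. -/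
open MeasureTheory ProbabilityTheory
open scoped ENNReal

/-- The sequence `m₀, m₁, …, mₙ` built from `m0` and the vector `mv = (m₁,…,mₙ)`. -/
def prevVal (n : ℕ) (m0 : ℕ) (mv : Fin n → ℕ) : ℕ → ℕ :=
  fun t => if t = 0 then m0 else if h : t - 1 < n then mv ⟨t - 1, h⟩ else 0

universe u

/-- Abstract single-`m₀` decoupling bound, proved by induction on the number of blocks. -/
lemma aux_block (n : ℕ) :
    ∀ (Ω : Fin n → Type u) [inst : ∀ i, MeasurableSpace (Ω i)]
      (μ : ∀ i, Measure (Ω i)) [inst2 : ∀ i, IsProbabilityMeasure (μ i)]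
      (Mb : ℝ≥0∞)
      (f : ∀ i : Fin n, ℕ → ℤ → Ω i → ℝ≥0∞)
      (c : ∀ _ : Fin n, (Fin n → ℕ) → (∀ j, Ω j) → ℤ),
      (∀ (i : Fin n) (mv : Fin n → ℕ),
        Measurable fun ω : ∀ j, Ω j => f i (mv i) (c i mv ω) (ω i)) →
      (∀ (i : Fin n) (mv mv' : Fin n → ℕ) (ω ω' : ∀ j, Ω j),
        (∀ j : Fin n, (j : ℕ) < (i : ℕ) → mv j = mv' j) →
        (∀ j : Fin n, (j : ℕ) < (i : ℕ) → ω j = ω' j) → c i mv ω = c i mv' ω') →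
      (∀ (i : Fin n) (ℓ : ℤ), (∑' m : ℕ, ∫⁻ ω, f i m ℓ ω ∂(μ i)) ≤ Mb) →
      (∫⁻ ω, (∑' mv : Fin n → ℕ, ∏ i, f i (mv i) (c i mv ω) (ω i)) ∂Measure.pi μ) ≤ Mb ^ n := by
  induction n with
  | zero =>
    intro Ω mΩ μ hμ Mb f c _ _ _
    have h1 : ∀ ω : ∀ j, Ω j,
        (∑' mv : Fin 0 → ℕ, ∏ i, f i (mv i) (c i mv ω) (ω i)) = 1 := by
      intro ω
      rw [tsum_eq_single (fun j : Fin 0 => (0 : ℕ))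
        (fun b hb => absurd (Subsingleton.elim b _) hb)]
      simp
    simp only [h1]
    rw [lintegral_one, measure_univ, pow_zero]
  | succ n ih =>
    intro Ω mΩ μ hμ Mb f c hmeas hc hf
    -- a default point
    have hne : ∀ j, Nonempty (Ω j) := by
      intro j
      by_contra h
      rw [not_nonempty_iff] at h
      have h1 : (μ j) Set.univ = 1 := measure_univ
      rw [Set.univ_eq_empty_iff.mpr h, measure_empty] at h1
      exact zero_ne_one h1
    have ω₀ : ∀ j, Ω j := fun j => (hne j).some
    set ℓ0 : ℤ := c 0 (fun _ => 0) ω₀ with hℓ0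
    have hc0 : ∀ (mv : Fin (n + 1) → ℕ) (ω : ∀ j, Ω j), c 0 mv ω = ℓ0 :=
      fun mv ω => hc 0 mv _ ω ω₀ (fun j hj => absurd hj (Nat.not_lt_zero _))
        (fun j hj => absurd hj (Nat.not_lt_zero _))
    have hFmeas : Measurable fun ω : ∀ j, Ω j =>
        ∑' mv : Fin (n + 1) → ℕ, ∏ i, f i (mv i) (c i mv ω) (ω i) :=
      Measurable.ennreal_tsum fun mv => Finset.measurable_prod _ fun i _ => hmeas i mv
    have hEsymm : ∀ (x : Ω 0) (p : ∀ j : Fin n, Ω (Fin.succ j)),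
        (MeasurableEquiv.piFinSuccAbove Ω 0).symm (x, p) = Fin.cons x p := by
      intro x p
      simp only [MeasurableEquiv.piFinSuccAbove, Fin.insertNthEquiv_zero,
        MeasurableEquiv.symm_mk, MeasurableEquiv.coe_mk, Equiv.symm_symm]
      rfl
    -- step 1 : disintegrate the first coordinate
    have step1 : (∫⁻ ω, (∑' mv : Fin (n + 1) → ℕ,
            ∏ i, f i (mv i) (c i mv ω) (ω i)) ∂Measure.pi μ)
        = ∫⁻ x, (∫⁻ p, (∑' mv : Fin (n + 1) → ℕ,
            ∏ i, f i (mv i) (c i mv (Fin.cons x p)) (Fin.cons x p i))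
              ∂(Measure.pi fun j : Fin n => μ (Fin.succ j))) ∂(μ 0) := by
      have h2' : (∫⁻ z, (∑' mv : Fin (n + 1) → ℕ,
              ∏ i, f i (mv i) (c i mv ((MeasurableEquiv.piFinSuccAbove Ω 0).symm z))
                ((MeasurableEquiv.piFinSuccAbove Ω 0).symm z i))
            ∂((μ 0).prod (Measure.pi fun j : Fin n => μ (Fin.succ j))))
          = ∫⁻ ω, (∑' mv : Fin (n + 1) → ℕ,
              ∏ i, f i (mv i) (c i mv ω) (ω i)) ∂Measure.pi μ :=
        ((measurePreserving_piFinSuccAbove μ 0).symm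
          (MeasurableEquiv.piFinSuccAbove Ω 0)).lintegral_comp hFmeas
      have h3 := lintegral_prod (μ := μ 0)
        (ν := Measure.pi fun j : Fin n => μ (Fin.succ j))
        (fun z : Ω 0 × ∀ j : Fin n, Ω (Fin.succ j) =>
          ∑' mv : Fin (n + 1) → ℕ,
            ∏ i, f i (mv i) (c i mv ((MeasurableEquiv.piFinSuccAbove Ω 0).symm z))
              ((MeasurableEquiv.piFinSuccAbove Ω 0).symm z i))
        ((hFmeas.comp (MeasurableEquiv.piFinSuccAbove Ω 0).symm.measurable).aemeasurable)
      rw [← h2', h3]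
      refine lintegral_congr fun x => lintegral_congr fun p => ?_
      erw [hEsymm]
    rw [step1]
    -- pointwise rewriting of the inner sum
    have hce : ∀ (m : ℕ) (v : Fin n → ℕ),
        (Fin.consEquiv fun _ : Fin (n + 1) => ℕ) (m, v) = Fin.cons m v := fun _ _ => rfl
    have key : ∀ (x : Ω 0) (p : ∀ j : Fin n, Ω (Fin.succ j)),
        (∑' mv : Fin (n + 1) → ℕ,
            ∏ i, f i (mv i) (c i mv (Fin.cons x p)) (Fin.cons x p i))
        = ∑' m : ℕ, f 0 m ℓ0 x *
            ∑' v : Fin n → ℕ, ∏ i : Fin n,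
              f (Fin.succ i) (v i) (c (Fin.succ i) (Fin.cons m v) (Fin.cons x p)) (p i) := by
      intro x p
      rw [← Equiv.tsum_eq (Fin.consEquiv fun _ : Fin (n + 1) => ℕ), ENNReal.tsum_prod']
      refine tsum_congr fun m => ?_
      rw [← ENNReal.tsum_mul_left]
      refine tsum_congr fun v => ?_
      simp only [hce]
      rw [Fin.prod_univ_succ]
      simp only [Fin.cons_zero, Fin.cons_succ, hc0]
    -- measurability helpers on the tail space
    have hconsx : ∀ x : Ω 0, Measurable fun p : ∀ j : Fin n, Ω (Fin.succ j) =>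
        (Fin.cons x p : ∀ j, Ω j) := by
      intro x
      apply measurable_pi_iff.2
      intro j
      refine Fin.cases ?_ ?_ j
      · simp only [Fin.cons_zero]; exact measurable_const
      · intro k; simp only [Fin.cons_succ]; exact measurable_pi_apply k
    have hmeas' : ∀ (x : Ω 0) (m : ℕ) (i : Fin n) (v : Fin n → ℕ),
        Measurable fun p : ∀ j : Fin n, Ω (Fin.succ j) =>
          f (Fin.succ i) (v i) (c (Fin.succ i) (Fin.cons m v) (Fin.cons x p)) (p i) := by
      intro x m i v
      have h2 := (hmeas (Fin.succ i) (Fin.cons m v)).comp (hconsx x)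
      simp only [Fin.cons_succ] at h2
      exact h2
    have hGmeas : ∀ (x : Ω 0) (m : ℕ),
        Measurable fun p : ∀ j : Fin n, Ω (Fin.succ j) =>
          ∑' v : Fin n → ℕ, ∏ i : Fin n,
            f (Fin.succ i) (v i) (c (Fin.succ i) (Fin.cons m v) (Fin.cons x p)) (p i) :=
      fun x m => Measurable.ennreal_tsum fun v =>
        Finset.measurable_prod _ fun i _ => hmeas' x m i v
    -- consistency of the coupling constants on the tail system
    have hc' : ∀ (x : Ω 0) (m : ℕ) (i : Fin n) (v v' : Fin n → ℕ)
        (p p' : ∀ j : Fin n, Ω (Fin.succ j)),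
        (∀ j : Fin n, (j : ℕ) < (i : ℕ) → v j = v' j) →
        (∀ j : Fin n, (j : ℕ) < (i : ℕ) → p j = p' j) →
        c (Fin.succ i) (Fin.cons m v) (Fin.cons x p)
          = c (Fin.succ i) (Fin.cons m v') (Fin.cons x p') := by
      intro x m i v v' p p' hv hp
      apply hc
      · intro j hj
        rcases Fin.eq_zero_or_eq_succ j with rfl | ⟨k, rfl⟩
        · simp
        · simp only [Fin.cons_succ]
          refine hv k ?_
          simp only [Fin.val_succ] at hj
          omega
      · intro j hj
        rcases Fin.eq_zero_or_eq_succ j with rfl | ⟨k, rfl⟩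
        · simp
        · simp only [Fin.cons_succ]
          refine hp k ?_
          simp only [Fin.val_succ] at hj
          omega
    -- the inner bound from the induction hypothesis
    have hinner : ∀ (x : Ω 0) (m : ℕ),
        (∫⁻ p, (∑' v : Fin n → ℕ, ∏ i : Fin n,
            f (Fin.succ i) (v i) (c (Fin.succ i) (Fin.cons m v) (Fin.cons x p)) (p i))
              ∂(Measure.pi fun j : Fin n => μ (Fin.succ j)))
          ≤ Mb ^ n := by
      intro x m
      exact @ih (fun j => Ω (Fin.succ j)) (fun j => mΩ _) (fun j => μ (Fin.succ j))
        (fun j => hμ _) Mb (fun i => f (Fin.succ i))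
        (fun i v p => c (Fin.succ i) (Fin.cons m v) (Fin.cons x p))
        (fun i v => hmeas' x m i v)
        (fun i v v' p p' hv hp => hc' x m i v v' p p' hv hp)
        (fun i ℓ => hf (Fin.succ i) ℓ)
    -- measurability of the first block
    have hf0meas : ∀ m : ℕ, Measurable fun x : Ω 0 => f 0 m ℓ0 x := by
      intro m
      have h1 : Measurable fun x : Ω 0 =>
          (Fin.cons x (fun j => ω₀ (Fin.succ j)) : ∀ j, Ω j) := by
        apply measurable_pi_iff.2
        intro j
        refine Fin.cases ?_ ?_ j
        · simp only [Fin.cons_zero]; exact measurable_id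
        · intro k; simp only [Fin.cons_succ]; exact measurable_const
      have h2 := (hmeas 0 (fun _ => m)).comp h1
      simp only [Fin.cons_zero, hc0] at h2
      exact h2
    -- put everything together
    calc ∫⁻ x, (∫⁻ p, (∑' mv : Fin (n + 1) → ℕ,
            ∏ i, f i (mv i) (c i mv (Fin.cons x p)) (Fin.cons x p i))
              ∂(Measure.pi fun j : Fin n => μ (Fin.succ j))) ∂(μ 0)
        ≤ ∫⁻ x, (∑' m : ℕ, f 0 m ℓ0 x) * Mb ^ n ∂(μ 0) := by
          refine lintegral_mono fun x => ?_
          calc (∫⁻ p, (∑' mv : Fin (n + 1) → ℕ,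
                  ∏ i, f i (mv i) (c i mv (Fin.cons x p)) (Fin.cons x p i))
                ∂(Measure.pi fun j : Fin n => μ (Fin.succ j)))
              = ∫⁻ p, (∑' m : ℕ, f 0 m ℓ0 x *
                  ∑' v : Fin n → ℕ, ∏ i : Fin n,
                    f (Fin.succ i) (v i)
                      (c (Fin.succ i) (Fin.cons m v) (Fin.cons x p)) (p i))
                ∂(Measure.pi fun j : Fin n => μ (Fin.succ j)) :=
                lintegral_congr fun p => key x p
            _ = ∑' m : ℕ, ∫⁻ p, (f 0 m ℓ0 x *
                  ∑' v : Fin n → ℕ, ∏ i : Fin n,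
                    f (Fin.succ i) (v i)
                      (c (Fin.succ i) (Fin.cons m v) (Fin.cons x p)) (p i))
                ∂(Measure.pi fun j : Fin n => μ (Fin.succ j)) :=
                lintegral_tsum fun m => (measurable_const.mul (hGmeas x m)).aemeasurable
            _ = ∑' m : ℕ, f 0 m ℓ0 x *
                  ∫⁻ p, (∑' v : Fin n → ℕ, ∏ i : Fin n,
                    f (Fin.succ i) (v i)
                      (c (Fin.succ i) (Fin.cons m v) (Fin.cons x p)) (p i))
                ∂(Measure.pi fun j : Fin n => μ (Fin.succ j)) :=
                tsum_congr fun m => lintegral_const_mul _ (hGmeas x m)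
            _ ≤ ∑' m : ℕ, f 0 m ℓ0 x * Mb ^ n :=
                ENNReal.tsum_le_tsum fun m => mul_le_mul_right (hinner x m) _
            _ = (∑' m : ℕ, f 0 m ℓ0 x) * Mb ^ n := ENNReal.tsum_mul_right
      _ = (∫⁻ x, ∑' m : ℕ, f 0 m ℓ0 x ∂(μ 0)) * Mb ^ n :=
          lintegral_mul_const _ (Measurable.ennreal_tsum hf0meas)
      _ = (∑' m : ℕ, ∫⁻ x, f 0 m ℓ0 x ∂(μ 0)) * Mb ^ n := by
          rw [lintegral_tsum fun m => (hf0meas m).aemeasurable]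
      _ ≤ Mb * Mb ^ n := mul_le_mul_left (hf 0 ℓ0) _
      _ = Mb ^ (n + 1) := (pow_succ' Mb n).symm

/-- Abstract block-decoupling inequality (Basu–Ganguly–Hoffman framework): blocks
`i = 1, …, n` carry independent randomness (coordinates of a product probability
space); if each block satisfies the single-block bound
`sup_ℓ Σ_m E[e^{α S_i(m)} 1_{L_i(m) = ℓ}] ≤ M`, then summing over all tuples
`(m₁,…,mₙ)` compatible with the mass balance constraints
`L_i(m_i) = m_{i-1} − R_{i-2}(m_{i-2})` (with `R_{-1} = R_0 ≡ 0`), and over the at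
most `r` possible values of `m₀`, gives total mass at most `r·Mⁿ`. -/
theorem block_decoupling
    (n r : ℕ) (α : ℝ) (hα : 0 < α)
    (Ω : Fin n → Type*) [∀ i, MeasurableSpace (Ω i)]
    (μ : ∀ i, Measure (Ω i)) [∀ i, IsProbabilityMeasure (μ i)]
    (S : ∀ i : Fin n, ℕ → Ω i → ℝ)
    (L R : ∀ i : Fin n, ℕ → Ω i → ℕ)
    (hSmeas : ∀ i m, Measurable (S i m))
    (hLmeas : ∀ i m, Measurable (L i m))
    (hRmeas : ∀ i m, Measurable (R i m))
    (hSnonneg : ∀ i m ω, 0 ≤ S i m ω)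
    (Mb : ℝ≥0∞)
    (hblock : ∀ i : Fin n, ∀ ℓ : ℤ,
      ∑' m : ℕ, ∫⁻ ω, (if (L i m ω : ℤ) = ℓ
          then ENNReal.ofReal (Real.exp (α * S i m ω)) else 0) ∂(μ i) ≤ Mb)
    (A : Finset ℕ) (hA : A.card ≤ r) :
    ∑ m0 ∈ A, ∫⁻ ω, ∑' mv : Fin n → ℕ, ∏ i : Fin n,
        (if (L i (mv i) (ω i) : ℤ)
            = (prevVal n m0 mv i : ℤ)
              - (if 2 ≤ (i : ℕ) then
                  (R ⟨(i : ℕ) - 2, lt_of_le_of_lt (Nat.sub_le _ _) i.isLt⟩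
                    (prevVal n m0 mv ((i : ℕ) - 1))
                    (ω ⟨(i : ℕ) - 2, lt_of_le_of_lt (Nat.sub_le _ _) i.isLt⟩) : ℤ)
                else 0)
          then ENNReal.ofReal (Real.exp (α * S i (mv i) (ω i))) else 0)
      ∂(Measure.pi μ)
    ≤ (r : ℝ≥0∞) * Mb ^ n := by
  classical
  refine le_trans (Finset.sum_le_sum (g := fun _ : ℕ => Mb ^ n) fun m0 _ => ?_) ?_
  · -- single value of m₀
    have hprev : ∀ (i : Fin n) (mv mv' : Fin n → ℕ),
        (∀ j : Fin n, (j : ℕ) < (i : ℕ) → mv j = mv' j) →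
        ∀ t : ℕ, t ≤ (i : ℕ) → prevVal n m0 mv t = prevVal n m0 mv' t := by
      intro i mv mv' h t ht
      unfold prevVal
      by_cases h0 : t = 0
      · simp [h0]
      · rw [if_neg h0, if_neg h0]
        split_ifs with hlt
        · exact h ⟨t - 1, hlt⟩ (show t - 1 < (i : ℕ) by omega)
        · rfl
    refine aux_block n Ω μ Mb
      (fun i m ℓ ωi => if (L i m ωi : ℤ) = ℓ
        then ENNReal.ofReal (Real.exp (α * S i m ωi)) else 0)
      (fun i mv ω => (prevVal n m0 mv i : ℤ) -
        (if 2 ≤ (i : ℕ) then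
          (R ⟨(i : ℕ) - 2, lt_of_le_of_lt (Nat.sub_le _ _) i.isLt⟩
            (prevVal n m0 mv ((i : ℕ) - 1))
            (ω ⟨(i : ℕ) - 2, lt_of_le_of_lt (Nat.sub_le _ _) i.isLt⟩) : ℤ)
          else 0))
      ?_ ?_ ?_
    · intro i mv
      apply Measurable.ite
      · apply measurableSet_eq_fun
        · exact measurable_from_top.comp ((hLmeas i (mv i)).comp (measurable_pi_apply i))
        · apply Measurable.sub measurable_const
          by_cases h2 : 2 ≤ (i : ℕ)
          · simp only [if_pos h2]
            exact measurable_from_top.comp ((hRmeas _ _).comp (measurable_pi_apply _))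
          · simp only [if_neg h2]
            exact measurable_const
      · exact ENNReal.measurable_ofReal.comp (Real.measurable_exp.comp
          (measurable_const.mul ((hSmeas i (mv i)).comp (measurable_pi_apply i))))
      · exact measurable_const
    · intro i mv mv' ω ω' hmv hω
      have hp := hprev i mv mv' hmv
      by_cases h2 : 2 ≤ (i : ℕ)
      · have hωeq := hω ⟨(i : ℕ) - 2, lt_of_le_of_lt (Nat.sub_le _ _) i.isLt⟩
          (show (i : ℕ) - 2 < (i : ℕ) by omega)
        simp only [hp (i : ℕ) le_rfl, hp ((i : ℕ) - 1) (Nat.sub_le _ _), hωeq]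
      · simp only [if_neg h2, hp (i : ℕ) le_rfl]
    · intro i ℓ
      exact hblock i ℓ
  · rw [Finset.sum_const, nsmul_eq_mul]
    exact mul_le_mul_left (by exact_mod_cast hA) _
end
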